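/- arXiv:1410.6046 — 4 statements merged into one kernel-verified Lean document; each statement's English description precedes it below -/
import Mathlib

section
/- In the quasi-consecutive pattern poset, suppose σ occurs precisely once in τ = a_1 a_2 ⋯ a_n and the unique occurrence involves a_2 but not a_1 and not a_n. Then μ(σ, τ) = 1 if [σ, τ] has rank 2, and μ(σ, τ) = 0 otherwise. -/
open scoped Classical

/-- A finite permutation of arbitrary length: a length `n` together with a
permutation of `Fin n` (in one-line notation, the entry at position `i` is
its value at `i`). -/
abbrev QPerm : Type := Σ n : ℕ, Equiv.Perm (Fin n)

/-- `IsOcc a σ τ f` : the strictly monotone position map `f` selects an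
occurrence of the pattern `σ` in `τ` (order-isomorphically), where for every
gap index `j ≥ 1` (1-indexed) with `a j = false` the `j`-th and `(j+1)`-th
selected positions must be adjacent in `τ`. -/
def IsOcc (a : ℕ → Bool) {k n : ℕ} (σ : Equiv.Perm (Fin k)) (τ : Equiv.Perm (Fin n))
    (f : Fin k → Fin n) : Prop :=
  StrictMono f ∧ (∀ i j : Fin k, σ i < σ j ↔ τ (f i) < τ (f j)) ∧
    ∀ (i : ℕ) (h : i + 1 < k), a (i + 1) = false →
      (f ⟨i + 1, h⟩ : ℕ) = (f ⟨i, Nat.lt_of_succ_lt h⟩ : ℕ) + 1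

/-- `σ` occurs in `τ` as an `a`-vincular pattern. -/
def VOcc (a : ℕ → Bool) (σ τ : QPerm) : Prop :=
  ∃ f : Fin σ.1 → Fin τ.1, IsOcc a σ.2 τ.2 f

/-- Covering relation of the `a`-vincular pattern poset. -/
def VCov (a : ℕ → Bool) (σ τ : QPerm) : Prop :=
  σ.1 + 1 = τ.1 ∧ VOcc a σ τ

/-- The `a`-vincular pattern order: reflexive-transitive closure of covering. -/
def VLe (a : ℕ → Bool) (σ τ : QPerm) : Prop :=
  Relation.ReflTransGen (VCov a) σ τ

/-- Occurrence as an `A`-vincular pattern for a matrix `A` (rows and columns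
1-indexed via `A i j`); a pattern of length `k` uses row `k - 1`. -/
def MOcc (A : ℕ → ℕ → Bool) (σ τ : QPerm) : Prop :=
  VOcc (fun j => A (σ.1 - 1) j) σ τ

/-- Covering relation of the `A`-vincular pattern poset. -/
def MCov (A : ℕ → ℕ → Bool) (σ τ : QPerm) : Prop :=
  σ.1 + 1 = τ.1 ∧ MOcc A σ τ

/-- The `A`-vincular pattern order. -/
def MLe (A : ℕ → ℕ → Bool) (σ τ : QPerm) : Prop :=
  Relation.ReflTransGen (MCov A) σ τ

/-- The quasi-consecutive adjacency vector `a = (1,0,0,…)` (1-indexed). -/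
def qa : ℕ → Bool := fun j => decide (j = 1)

/-- Quasi-consecutive pattern occurrence. -/
def QOcc (σ τ : QPerm) : Prop := VOcc qa σ τ

/-- Covering in the quasi-consecutive pattern poset. -/
def QCov (σ τ : QPerm) : Prop := VCov qa σ τ

/-- The quasi-consecutive pattern poset order. -/
def QLe (σ τ : QPerm) : Prop := VLe qa σ τ

/-- All permutations of length at most `n`, as a finset. -/
def permsUpTo (n : ℕ) : Finset QPerm :=
  (Finset.range (n + 1)).sigma fun _ => Finset.univ

/-- Möbius function of the quasi-consecutive pattern poset, computed with
fuel (the fuel `τ.1` always suffices, since lengths strictly increase along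
the order). -/
noncomputable def qMuAux : ℕ → QPerm → QPerm → ℤ
  | 0, σ, τ => if σ = τ then 1 else 0
  | m + 1, σ, τ =>
      if σ = τ then 1
      else -∑ z ∈ (permsUpTo τ.1).filter fun z => QLe σ z ∧ QLe z τ ∧ z ≠ τ,
            qMuAux m σ z

/-- The Möbius function of the quasi-consecutive pattern poset. -/
noncomputable def qMu (σ τ : QPerm) : ℤ := qMuAux τ.1 σ τ

/-- The interval `[σ, τ]` in the quasi-consecutive pattern poset. -/
def QInterval (σ τ : QPerm) : Set QPerm := {ρ | QLe σ ρ ∧ QLe ρ τ}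

/-- The interval `[σ, τ]` is a chain. -/
def QChain (σ τ : QPerm) : Prop :=
  ∀ ρ₁ ρ₂ : QPerm, ρ₁ ∈ QInterval σ τ → ρ₂ ∈ QInterval σ τ → QLe ρ₁ ρ₂ ∨ QLe ρ₂ ρ₁

/-- The interval `[σ, τ]` is order-isomorphic to the product of a chain with
`p + 1` elements and a chain with `q + 1` elements (componentwise order). -/
def IsGridInterval (σ τ : QPerm) (p q : ℕ) : Prop :=
  ∃ e : QInterval σ τ ≃ Fin (p + 1) × Fin (q + 1),
    ∀ ρ₁ ρ₂ : QInterval σ τ, QLe ρ₁.1 ρ₂.1 ↔ e ρ₁ ≤ e ρ₂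

/-- The occurrence `f` involves position `i` (0-indexed) of the big permutation. -/
def Involves {k n : ℕ} (f : Fin k → Fin n) (i : ℕ) : Prop :=
  ∃ j : Fin k, (f j : ℕ) = i

/-- The occurrence `f` is consecutive: all selected positions are adjacent. -/
def ConsecOcc {k n : ℕ} (f : Fin k → Fin n) : Prop :=
  ∀ (i : ℕ) (h : i + 1 < k),
    (f ⟨i + 1, h⟩ : ℕ) = (f ⟨i, Nat.lt_of_succ_lt h⟩ : ℕ) + 1

/-- The first two entries of `τ` are not consecutive integers. -/
def NotConsecFirstTwo (τ : QPerm) : Prop :=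
  ∀ i j : Fin τ.1, (i : ℕ) = 0 → (j : ℕ) = 1 →
    (τ.2 i : ℕ) + 1 ≠ (τ.2 j : ℕ) ∧ (τ.2 j : ℕ) + 1 ≠ (τ.2 i : ℕ)

/-- `τ` is a monotone (increasing or decreasing) permutation. -/
def IsMonotonePerm (τ : QPerm) : Prop :=
  (∀ i j : Fin τ.1, i < j → τ.2 i < τ.2 j) ∨ (∀ i j : Fin τ.1, i < j → τ.2 j < τ.2 i)

section QAux

open Finset

private noncomputable def patAux {m n : ℕ} (τ : Equiv.Perm (Fin n)) (u : Fin m → Fin n)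
    (i : Fin m) : Fin m :=
  ⟨((Finset.univ : Finset (Fin m)).filter fun j => τ (u j) < τ (u i)).card, by
    have hsub : ((Finset.univ : Finset (Fin m)).filter fun j => τ (u j) < τ (u i))
        ⊆ Finset.univ.erase i := by
      intro j hj
      have hj2 := (Finset.mem_filter.1 hj).2
      exact Finset.mem_erase.2 ⟨fun e => by subst e; exact lt_irrefl _ hj2, Finset.mem_univ _⟩
    have h1 := Finset.card_le_card hsub
    have h2 : (Finset.univ.erase i).card = m - 1 := by
      rw [Finset.card_erase_of_mem (Finset.mem_univ _), Finset.card_univ, Fintype.card_fin]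
    have h3 : 0 < m := i.pos
    omega⟩

private lemma patAux_lt {m n : ℕ} (τ : Equiv.Perm (Fin n)) (u : Fin m → Fin n)
    (i j : Fin m) (hv : τ (u i) < τ (u j)) : patAux τ u i < patAux τ u j := by
  have hsub : ((Finset.univ : Finset (Fin m)).filter fun l => τ (u l) < τ (u i))
      ⊂ ((Finset.univ : Finset (Fin m)).filter fun l => τ (u l) < τ (u j)) := by
    constructor
    · intro l hl
      have := (Finset.mem_filter.1 hl).2
      exact Finset.mem_filter.2 ⟨Finset.mem_univ _, this.trans hv⟩
    · intro hsup
      have hi : i ∈ (Finset.univ : Finset (Fin m)).filter fun l => τ (u l) < τ (u j) :=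
        Finset.mem_filter.2 ⟨Finset.mem_univ _, hv⟩
      have := (Finset.mem_filter.1 (hsup hi)).2
      exact lt_irrefl _ this
  exact Finset.card_lt_card hsub

private lemma patAux_inj {m n : ℕ} (τ : Equiv.Perm (Fin n)) (u : Fin m → Fin n)
    (hu : Function.Injective u) : Function.Injective (patAux τ u) := by
  intro i j hij
  by_contra hne
  have huij : u i ≠ u j := fun e => hne (hu e)
  have : τ (u i) ≠ τ (u j) := fun e => huij (τ.injective e)
  rcases lt_or_gt_of_ne this with h | h
  · exact absurd hij (ne_of_lt (patAux_lt τ u i j h))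
  · exact absurd hij.symm (ne_of_lt (patAux_lt τ u j i h))

/-- The pattern of `τ` along an injective position map `u`. -/
noncomputable def pat {m n : ℕ} (τ : Equiv.Perm (Fin n)) (u : Fin m → Fin n) :
    Equiv.Perm (Fin m) :=
  if h : Function.Injective u then
    Equiv.ofBijective (patAux τ u) ((Finite.injective_iff_bijective).1 (patAux_inj τ u h))
  else 1

lemma pat_lt_iff {m n : ℕ} (τ : Equiv.Perm (Fin n)) (u : Fin m → Fin n)
    (hu : Function.Injective u) (i j : Fin m) :
    pat τ u i < pat τ u j ↔ τ (u i) < τ (u j) := by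
  rw [pat, dif_pos hu]
  constructor
  · intro h
    by_contra hc
    push_neg at hc
    rcases eq_or_lt_of_le hc with he | hl
    · have : u j = u i := τ.injective he
      have : j = i := hu this
      subst this
      exact lt_irrefl _ h
    · exact absurd h (not_lt.2 (le_of_lt (patAux_lt τ u j i hl)))
  · exact patAux_lt τ u i j

/-- Two permutations with the same comparison structure are equal. -/
lemma perm_eq_of_iff {k : ℕ} (π π' : Equiv.Perm (Fin k))
    (h : ∀ i j, π i < π j ↔ π' i < π' j) : π = π' := by
  have hmono : StrictMono fun i => π' (π.symm i) := by
    intro i j hij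
    have : π (π.symm i) < π (π.symm j) := by
      simpa using hij
    exact (h _ _).1 this
  let e : Fin k ≃o Fin k :=
    { toEquiv := π.symm.trans π'
      map_rel_iff' := by
        intro i j
        exact hmono.le_iff_le }
  have he : e = OrderIso.refl (Fin k) := Subsingleton.elim _ _
  have : π.symm.trans π' = Equiv.refl (Fin k) := by
    have := congrArg (fun (o : Fin k ≃o Fin k) => o.toEquiv) he
    simpa using this
  calc π = π.symm.symm := by simp
  _ = π' := by
      rw [← Equiv.trans_refl π.symm.symm, ← this]
      ext i
      simp

end QAux

section QAux2

lemma isOcc_pat_of {k m n : ℕ} (σ : Equiv.Perm (Fin k)) (τ : Equiv.Perm (Fin n))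
    (u : Fin m → Fin n) (hu : Function.Injective u) (h : Fin k → Fin m)
    (hmono : StrictMono h)
    (hadj : ∀ (i : ℕ) (hi : i + 1 < k), qa (i + 1) = false →
      ((h ⟨i + 1, hi⟩ : ℕ) = (h ⟨i, Nat.lt_of_succ_lt hi⟩ : ℕ) + 1))
    (hcomp : ∀ i j : Fin k, σ i < σ j ↔ τ (u (h i)) < τ (u (h j))) :
    IsOcc qa σ (pat τ u) h :=
  ⟨hmono, fun i j => (hcomp i j).trans (pat_lt_iff τ u hu (h i) (h j)).symm, hadj⟩

lemma isOcc_pat_self {m n : ℕ} (τ : Equiv.Perm (Fin n)) (u : Fin m → Fin n)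
    (hmono : StrictMono u)
    (hadj : ∀ (i : ℕ) (hi : i + 1 < m), qa (i + 1) = false →
      ((u ⟨i + 1, hi⟩ : ℕ) = (u ⟨i, Nat.lt_of_succ_lt hi⟩ : ℕ) + 1)) :
    IsOcc qa (pat τ u) τ u :=
  ⟨hmono, fun i j => pat_lt_iff τ u hmono.injective i j, hadj⟩

lemma isOcc_id {k : ℕ} (π : Equiv.Perm (Fin k)) : IsOcc qa π π (fun i => i) :=
  ⟨strictMono_id, fun _ _ => Iff.rfl, fun _ _ _ => rfl⟩

lemma IsOcc.qa_comp {k m n : ℕ} {σ : Equiv.Perm (Fin k)} {ρ : Equiv.Perm (Fin m)}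
    {τ : Equiv.Perm (Fin n)} {f' : Fin k → Fin m} {g : Fin m → Fin n}
    (h1 : IsOcc qa σ ρ f') (h2 : IsOcc qa ρ τ g) : IsOcc qa σ τ (fun i => g (f' i)) := by
  refine ⟨h2.1.comp h1.1, fun i j => (h1.2.1 i j).trans (h2.2.1 _ _), ?_⟩
  intro i hi hfalse
  have hi1 : 1 ≤ i := by
    by_contra hc
    have : i = 0 := by omega
    subst this
    simp [qa] at hfalse
  have hstep := h1.2.2 i hi hfalse
  have hpos : 1 ≤ (f' ⟨i, Nat.lt_of_succ_lt hi⟩ : ℕ) := by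
    have hlt : (⟨0, by omega⟩ : Fin k) < ⟨i, Nat.lt_of_succ_lt hi⟩ :=
      Fin.mk_lt_mk.2 (by omega)
    have h2 : (f' ⟨0, by omega⟩ : ℕ) < (f' ⟨i, Nat.lt_of_succ_lt hi⟩ : ℕ) := h1.1 hlt
    omega
  have hjm : (f' ⟨i, Nat.lt_of_succ_lt hi⟩ : ℕ) + 1 < m := by
    rw [← hstep]; exact (f' ⟨i + 1, hi⟩).2
  have hadj := h2.2.2 (f' ⟨i, Nat.lt_of_succ_lt hi⟩ : ℕ) hjm (by simp [qa]; omega)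
  have e1 : f' ⟨i + 1, hi⟩ = ⟨(f' ⟨i, Nat.lt_of_succ_lt hi⟩ : ℕ) + 1, hjm⟩ := Fin.ext hstep
  have e2 : f' ⟨i, Nat.lt_of_succ_lt hi⟩
      = ⟨(f' ⟨i, Nat.lt_of_succ_lt hi⟩ : ℕ), Nat.lt_of_succ_lt hjm⟩ := Fin.ext rfl
  simp only [e1]
  rw [hadj]

lemma isOcc_block {k n : ℕ} {σ : Equiv.Perm (Fin k)} {τ : Equiv.Perm (Fin n)}
    {u : Fin k → Fin n} (h : IsOcc qa σ τ u) (hk : 1 < k) :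
    ∀ (i : ℕ) (hi : i < k), 1 ≤ i → (u ⟨i, hi⟩ : ℕ) = (u ⟨1, hk⟩ : ℕ) + (i - 1) := by
  intro i
  induction i with
  | zero => intro _ h1; omega
  | succ t ih =>
    intro hi h1
    rcases Nat.lt_or_ge t 1 with ht | ht
    · have : t = 0 := by omega
      subst this; simp
    · have hadj := h.2.2 t hi (by simp [qa]; omega)
      rw [hadj, ih (Nat.lt_of_succ_lt hi) ht]
      omega

lemma qle_exists_occ {σ τ : QPerm} (h : QLe σ τ) :
    ∃ u : Fin σ.1 → Fin τ.1, IsOcc qa σ.2 τ.2 u := by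
  induction h with
  | refl => exact ⟨fun i => i, isOcc_id _⟩
  | tail hab hbc ih =>
      obtain ⟨u, hu⟩ := ih
      obtain ⟨v, hv⟩ := hbc.2
      exact ⟨fun i => v (u i), hu.qa_comp hv⟩

lemma qle_len {σ τ : QPerm} (h : QLe σ τ) : σ.1 ≤ τ.1 := by
  induction h with
  | refl => exact le_refl _
  | tail hab hbc ih =>
      have := hbc.1
      omega

lemma qle_len_lt {σ τ : QPerm} (h : QLe σ τ) (hne : σ ≠ τ) : σ.1 < τ.1 := by
  induction h with
  | refl => exact absurd rfl hne
  | tail hab hbc ih =>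
      have h2 := qle_len hab
      have h3 := hbc.1
      omega

lemma qle_trans {σ ρ τ : QPerm} (h1 : QLe σ ρ) (h2 : QLe ρ τ) : QLe σ τ :=
  Relation.ReflTransGen.trans h1 h2

lemma qMuAux_fuel : ∀ (f1 : ℕ), ∀ (f2 : ℕ) (σ τ : QPerm), τ.1 ≤ f1 → τ.1 ≤ f2 →
    qMuAux f1 σ τ = qMuAux f2 σ τ := by
  have hmem : ∀ (σ τ z : QPerm),
      z ∈ (permsUpTo τ.1).filter (fun z => QLe σ z ∧ QLe z τ ∧ z ≠ τ) → z.1 < τ.1 := by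
    intro σ τ z hz
    rw [Finset.mem_filter] at hz
    exact qle_len_lt hz.2.2.1 hz.2.2.2
  intro f1
  induction f1 with
  | zero =>
      intro f2 σ τ h1 h2
      have : τ.1 = 0 := by omega
      cases f2 with
      | zero => rfl
      | succ m =>
          by_cases he : σ = τ
          · simp [qMuAux, he]
          · rw [qMuAux, qMuAux, if_neg he, if_neg he]
            have : (permsUpTo τ.1).filter (fun z => QLe σ z ∧ QLe z τ ∧ z ≠ τ) = ∅ := by
              rw [Finset.eq_empty_iff_forall_notMem]
              intro z hz
              have := hmem σ τ z hz
              omega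
            simp [this]
  | succ a ih =>
      intro f2 σ τ h1 h2
      cases f2 with
      | zero =>
          have : τ.1 = 0 := by omega
          by_cases he : σ = τ
          · simp [qMuAux, he]
          · rw [qMuAux, qMuAux, if_neg he, if_neg he]
            have : (permsUpTo τ.1).filter (fun z => QLe σ z ∧ QLe z τ ∧ z ≠ τ) = ∅ := by
              rw [Finset.eq_empty_iff_forall_notMem]
              intro z hz
              have := hmem σ τ z hz
              omega
            simp [this]
      | succ b =>
          by_cases he : σ = τ
          · simp [qMuAux, he]
          · rw [qMuAux, qMuAux, if_neg he, if_neg he]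
            congr 1
            apply Finset.sum_congr rfl
            intro z hz
            have hzl := hmem σ τ z hz
            exact ih b σ z (by omega) (by omega)

lemma qMu_self (σ : QPerm) : qMu σ σ = 1 := by
  rw [qMu]
  cases h : σ.1 with
  | zero => simp [qMuAux]
  | succ m => simp [qMuAux]

lemma qMu_rec (σ τ : QPerm) (hne : σ ≠ τ) :
    qMu σ τ = -∑ z ∈ (permsUpTo τ.1).filter (fun z => QLe σ z ∧ QLe z τ ∧ z ≠ τ),
      qMu σ z := by
  rw [qMu]
  cases h : τ.1 with
  | zero =>
      rw [qMuAux, if_neg hne]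
      have hemp : (permsUpTo 0).filter (fun z => QLe σ z ∧ QLe z τ ∧ z ≠ τ) = ∅ := by
        rw [Finset.eq_empty_iff_forall_notMem]
        intro z hz
        rw [Finset.mem_filter] at hz
        have := qle_len_lt hz.2.2.1 hz.2.2.2
        omega
      rw [hemp]
      simp
  | succ m =>
      rw [qMuAux, if_neg hne]
      congr 1
      apply Finset.sum_congr (by rw [h])
      intro z hz
      rw [Finset.mem_filter] at hz
      have := qle_len_lt hz.2.2.1 hz.2.2.2
      exact qMuAux_fuel m z.1 σ z (by omega) (le_refl _)

def mval : ℕ → ℤ := fun i => if i = 0 then 1 else if i = 1 then -1 else 0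

lemma mval_sum (x : ℕ) : ∑ i ∈ Finset.range (x + 1), mval i = if x = 0 then 1 else 0 := by
  induction x with
  | zero => simp [mval]
  | succ t ih =>
      rw [Finset.sum_range_succ, ih]
      rcases Nat.eq_zero_or_pos t with h | h
      · subst h; simp [mval]
      · have ht : t ≠ 0 := by omega
        by_cases h1 : t + 1 = 1
        · omega
        · simp [mval, ht, h1, Nat.succ_ne_zero]

end QAux2

section QAux3

/-- Position map values for grid elements. -/
def gnat (b x : ℕ) : ℕ → ℕ :=
  fun i => if i = 0 then (if x + 1 = b then 0 else 1) else b - x + (i - 1)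

/-- Index map values for `x`-steps. -/
def snat (b x : ℕ) : ℕ → ℕ :=
  fun i => if i = 0 then (if x + 2 = b then 1 else 0) else i + 1

/-- Index map values for the canonical occurrence of `σ` in a grid element. -/
def wnat (b x : ℕ) : ℕ → ℕ :=
  fun i => if i = 0 then (if x + 1 = b then 1 else 0) else x + i

/-- The grid family of patterns of `τ`. -/
noncomputable def Zp {n : ℕ} (τ : Equiv.Perm (Fin n)) (b k x y : ℕ) : QPerm :=
  if h : ∀ i, i < k + x + y → gnat b x i < n then
    ⟨k + x + y, pat τ (fun i => ⟨gnat b x i.1, h i.1 i.2⟩)⟩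
  else ⟨k + x + y, 1⟩

lemma Zp_fst {n : ℕ} (τ : Equiv.Perm (Fin n)) (b k x y : ℕ) :
    (Zp τ b k x y).1 = k + x + y := by
  rw [Zp]; split <;> rfl

lemma Zp_eq {n : ℕ} (τ : Equiv.Perm (Fin n)) (b k x y : ℕ)
    (h : ∀ i, i < k + x + y → gnat b x i < n) :
    Zp τ b k x y = ⟨k + x + y, pat τ (fun i => ⟨gnat b x i.1, h i.1 i.2⟩)⟩ :=
  dif_pos h

lemma qperm_ext {m m' : ℕ} (π : Equiv.Perm (Fin m)) (π' : Equiv.Perm (Fin m'))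
    (h : m = m')
    (hp : ∀ i j : Fin m, π i < π j ↔ π' ⟨i.1, h ▸ i.2⟩ < π' ⟨j.1, h ▸ j.2⟩) :
    (⟨m, π⟩ : QPerm) = ⟨m', π'⟩ := by
  subst h
  exact congrArg _ (perm_eq_of_iff π π' hp)

end QAux3

section QAux4

lemma perm_lt_congr {n : ℕ} (τ : Equiv.Perm (Fin n)) {a a' c c' : Fin n}
    (h1 : a = a') (h2 : c = c') : (τ a < τ c ↔ τ a' < τ c') := by rw [h1, h2]

lemma isOcc_pat_pat {k m n : ℕ} (τ : Equiv.Perm (Fin n)) (u : Fin m → Fin n)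
    (hu : Function.Injective u) (v : Fin k → Fin n) (hv : Function.Injective v)
    (h : Fin k → Fin m) (hmono : StrictMono h)
    (hadj : ∀ (i : ℕ) (hi : i + 1 < k), qa (i + 1) = false →
      ((h ⟨i + 1, hi⟩ : ℕ) = (h ⟨i, Nat.lt_of_succ_lt hi⟩ : ℕ) + 1))
    (hcomp : ∀ i, u (h i) = v i) : IsOcc qa (pat τ v) (pat τ u) h := by
  refine ⟨hmono, fun i j => ?_, hadj⟩
  rw [pat_lt_iff τ v hv, pat_lt_iff τ u hu, hcomp i, hcomp j]

end QAux4

section QAux5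

private lemma false_elim' {p : Prop} (h : False) : p := h.elim

lemma gnat_lt_gnat {b x i j : ℕ} (hb : 2 ≤ b) (hx : x + 1 ≤ b) (hij : i < j) :
    gnat b x i < gnat b x j := by
  simp only [gnat]; split_ifs <;> first | exact false_elim' ‹False› | omega

lemma gnat_adj {b x i : ℕ} (h1 : 1 ≤ i) : gnat b x (i + 1) = gnat b x i + 1 := by
  simp only [gnat]; split_ifs <;> first | exact false_elim' ‹False› | omega

lemma gnat_wnat_zero {b x : ℕ} (hb : 2 ≤ b) (hx : x + 1 ≤ b) :
    gnat b x (wnat b x 0) = 1 := by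
  simp only [gnat, wnat]; split_ifs <;> first | exact false_elim' ‹False› | omega

lemma gnat_wnat_pos {b x i : ℕ} (hb : 2 ≤ b) (hx : x + 1 ≤ b) (h1 : 1 ≤ i) :
    gnat b x (wnat b x i) = b + i - 1 := by
  simp only [gnat, wnat]; split_ifs <;> first | exact false_elim' ‹False› | omega

lemma gnat_zero_zero {b : ℕ} (hb : 2 ≤ b) : gnat b 0 0 = 1 := by
  simp only [gnat]; split_ifs <;> first | exact false_elim' ‹False› | omega

lemma gnat_zero_pos {b i : ℕ} (h1 : 1 ≤ i) : gnat b 0 i = b + i - 1 := by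
  simp only [gnat]; split_ifs <;> first | exact false_elim' ‹False› | omega

lemma gnat_top {b : ℕ} (hb : 2 ≤ b) (i : ℕ) : gnat b (b - 1) i = i := by
  simp only [gnat]; split_ifs <;> first | exact false_elim' ‹False› | omega

lemma wnat_bound {b x y k i : ℕ} (hk : 2 ≤ k) (hi : i < k) : wnat b x i < k + x + y := by
  simp only [wnat]; split_ifs <;> first | exact false_elim' ‹False› | omega

lemma wnat_lt_wnat {b x i j : ℕ} (hb : 2 ≤ b) (hx : x + 1 ≤ b) (hij : i < j) :
    wnat b x i < wnat b x j := by
  simp only [wnat]; split_ifs <;> first | exact false_elim' ‹False› | omega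

lemma wnat_adj {b x i : ℕ} (h1 : 1 ≤ i) : wnat b x (i + 1) = wnat b x i + 1 := by
  simp only [wnat]; split_ifs <;> first | exact false_elim' ‹False› | omega

lemma snat_bound {b x m i : ℕ} (hi : i < m) : snat b x i < m + 1 := by
  simp only [snat]; split_ifs <;> first | exact false_elim' ‹False› | omega

lemma snat_lt_snat {b x i j : ℕ} (hij : i < j) : snat b x i < snat b x j := by
  simp only [snat]; split_ifs <;> first | exact false_elim' ‹False› | omega

lemma snat_adj {b x i : ℕ} (h1 : 1 ≤ i) : snat b x (i + 1) = snat b x i + 1 := by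
  simp only [snat]; split_ifs <;> first | exact false_elim' ‹False› | omega

lemma gnat_snat {b x i : ℕ} (hb : 2 ≤ b) (hx : x + 2 ≤ b) :
    gnat b (x + 1) (snat b x i) = gnat b x i := by
  simp only [gnat, snat]; split_ifs <;> first | exact false_elim' ‹False› | omega

end QAux5

section QAux6

lemma gnat_pos {b x i : ℕ} (h1 : 1 ≤ i) : gnat b x i = b - x + (i - 1) := by
  simp only [gnat]; split_ifs <;> first | exact false_elim' (by omega) | rfl

lemma gnat_at_zero {b x : ℕ} (h : x + 1 ≠ b) : gnat b x 0 = 1 := by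
  simp only [gnat]; split_ifs <;> first | exact absurd ‹x + 1 = b› h | rfl | exact false_elim' (by omega)

lemma wnat_one {b x : ℕ} : wnat b x 1 = x + 1 := by
  simp [wnat]

end QAux6


/-- If `σ` occurs precisely once in `τ = a₁a₂⋯aₙ` and the occurrence
involves `a₂` but neither `a₁` nor `aₙ`, then `μ(σ,τ) = 1` if `[σ,τ]` has
rank `2` and `μ(σ,τ) = 0` otherwise. -/
theorem unique_occurrence_second_entry (σ τ : QPerm) (hle : QLe σ τ)
    (f : Fin σ.1 → Fin τ.1) (hf : IsOcc qa σ.2 τ.2 f)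
    (huniq : ∀ g : Fin σ.1 → Fin τ.1, IsOcc qa σ.2 τ.2 g → g = f)
    (h1 : Involves f 1) (h0 : ¬ Involves f 0) (hn : ¬ Involves f (τ.1 - 1)) :
    (τ.1 - σ.1 = 2 → qMu σ τ = 1) ∧ (τ.1 - σ.1 ≠ 2 → qMu σ τ = 0) := by
  classical
  obtain ⟨j0, hj0⟩ := h1
  have hk1 : 0 < σ.1 := j0.pos
  have hn1 : 0 < τ.1 := (f j0).pos
  have hf0 : (f ⟨0, hk1⟩ : ℕ) = 1 := by
    rcases Nat.eq_zero_or_pos j0.1 with hz | hpz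
    · have he : j0 = ⟨0, hk1⟩ := Fin.ext hz
      rw [← he]; exact hj0
    · exfalso
      have hlt : (⟨0, hk1⟩ : Fin σ.1) < j0 := by rw [Fin.lt_def]; exact hpz
      have h2 : (f ⟨0, hk1⟩ : ℕ) < (f j0 : ℕ) := hf.1 hlt
      rw [hj0] at h2
      exact h0 ⟨⟨0, hk1⟩, by omega⟩
  have hk : 2 ≤ σ.1 := by
    by_contra hc
    have hks : σ.1 = 1 := by omega
    have hocc : IsOcc qa σ.2 τ.2 (fun _ => ⟨0, hn1⟩) := by
      refine ⟨?_, ?_, ?_⟩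
      · intro i j hij
        exfalso
        have hi := i.2; have hj := j.2
        rw [Fin.lt_def] at hij
        omega
      · intro i j
        have he : i = j := Fin.ext (by have := i.2; have := j.2; omega)
        subst he
        simp
      · intro i hi _
        omega
    have hgf := congrFun (huniq _ hocc) ⟨0, hk1⟩
    rw [← hgf] at hf0
    simp at hf0
  have hklt : 1 < σ.1 := hk
  obtain ⟨b, hbdef⟩ : ∃ b, b = (f ⟨1, hklt⟩ : ℕ) := ⟨_, rfl⟩
  have hb2 : 2 ≤ b := by
    have hlt : (⟨0, hk1⟩ : Fin σ.1) < ⟨1, hklt⟩ := Fin.mk_lt_mk.2 Nat.zero_lt_one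
    have h2 : (f ⟨0, hk1⟩ : ℕ) < (f ⟨1, hklt⟩ : ℕ) := hf.1 hlt
    omega
  have hfi : ∀ (i : ℕ) (hi : i < σ.1), 1 ≤ i → (f ⟨i, hi⟩ : ℕ) = b + i - 1 := by
    intro i hi h1i
    have := isOcc_block hf hklt i hi h1i
    omega
  have hend : b + σ.1 ≤ τ.1 := by
    have hlast := hfi (σ.1 - 1) (by omega) (by omega)
    have hlt := (f ⟨σ.1 - 1, by omega⟩).2
    have hne : (f ⟨σ.1 - 1, by omega⟩ : ℕ) ≠ τ.1 - 1 := fun e => hn ⟨_, e⟩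
    omega
  have hcond : ∀ x y, x + 1 ≤ b → b + σ.1 + y ≤ τ.1 + 1 →
      ∀ i, i < σ.1 + x + y → gnat b x i < τ.1 := by
    intro x y hx hy i hi
    rw [gnat]
    split_ifs <;> omega
  have hZeq : ∀ (x y : ℕ) (hx : x + 1 ≤ b) (hy : b + σ.1 + y ≤ τ.1 + 1),
      Zp τ.2 b σ.1 x y
        = ⟨σ.1 + x + y, pat τ.2 (fun i => ⟨gnat b x i.1, hcond x y hx hy i.1 i.2⟩)⟩ :=
    fun x y hx hy => Zp_eq τ.2 b σ.1 x y (hcond x y hx hy)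
  have hσpat : σ.2 = pat τ.2 f :=
    perm_eq_of_iff _ _ (fun i j => (hf.2.1 i j).trans (pat_lt_iff τ.2 f hf.1.injective i j).symm)
  have hGmono : ∀ (x y : ℕ) (hx : x + 1 ≤ b) (hy : b + σ.1 + y ≤ τ.1 + 1),
      StrictMono (fun i : Fin (σ.1 + x + y) =>
        (⟨gnat b x i.1, hcond x y hx hy i.1 i.2⟩ : Fin τ.1)) :=
    fun x y hx _ _ _ hij => gnat_lt_gnat hb2 hx hij
  have hqa1 : ∀ i : ℕ, qa (i + 1) = false → 1 ≤ i := by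
    intro i hq
    by_contra hc
    have : i = 0 := by omega
    subst this
    simp [qa] at hq
  have hGocc : ∀ (x y : ℕ) (hx : x + 1 ≤ b) (hy : b + σ.1 + y ≤ τ.1 + 1),
      IsOcc qa (pat τ.2 (fun i : Fin (σ.1 + x + y) =>
          (⟨gnat b x i.1, hcond x y hx hy i.1 i.2⟩ : Fin τ.1))) τ.2
        (fun i : Fin (σ.1 + x + y) => (⟨gnat b x i.1, hcond x y hx hy i.1 i.2⟩ : Fin τ.1)) := by
    intro x y hx hy
    exact isOcc_pat_self τ.2 _ (hGmono x y hx hy)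
      (fun i hi hq => gnat_adj (hqa1 i hq))
  have hGWfN : ∀ (x : ℕ), x + 1 ≤ b → ∀ i : Fin σ.1,
      gnat b x (wnat b x i.1) = (f i : ℕ) := by
    intro x hx i
    rcases Nat.eq_zero_or_pos i.1 with h0i | h1i
    · have he : i = ⟨0, hk1⟩ := Fin.ext h0i
      rw [h0i, he, hf0]
      exact gnat_wnat_zero hb2 hx
    · have hv := hfi i.1 i.2 h1i
      rw [Fin.eta] at hv
      rw [hv]
      exact gnat_wnat_pos hb2 hx h1i
  have hWocc : ∀ (x y : ℕ) (hx : x + 1 ≤ b) (hy : b + σ.1 + y ≤ τ.1 + 1),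
      IsOcc qa σ.2 (pat τ.2 (fun i : Fin (σ.1 + x + y) =>
          (⟨gnat b x i.1, hcond x y hx hy i.1 i.2⟩ : Fin τ.1)))
        (fun i : Fin σ.1 => (⟨wnat b x i.1, wnat_bound hk i.2⟩ : Fin (σ.1 + x + y))) := by
    intro x y hx hy
    rw [hσpat]
    refine isOcc_pat_pat τ.2 _ (hGmono x y hx hy).injective f hf.1.injective _ ?_ ?_ ?_
    · exact fun i j hij => wnat_lt_wnat hb2 hx hij
    · exact fun i hi hq => wnat_adj (hqa1 i hq)
    · exact fun i => Fin.ext (hGWfN x hx i)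
  have hcovY : ∀ (x y : ℕ) (hx : x + 1 ≤ b) (hy : b + σ.1 + (y + 1) ≤ τ.1 + 1),
      QCov (Zp τ.2 b σ.1 x y) (Zp τ.2 b σ.1 x (y + 1)) := by
    intro x y hx hy
    rw [hZeq x y hx (by omega), hZeq x (y + 1) hx hy]
    refine ⟨rfl, ⟨fun i => ⟨i.1, by
      have h2 : i.1 < σ.1 + x + y := i.2
      show i.1 < σ.1 + x + (y + 1)
      omega⟩, ?_⟩⟩
    refine isOcc_pat_pat τ.2 _ (hGmono x (y + 1) hx hy).injective _
      (hGmono x y hx (by omega)).injective _ ?_ ?_ ?_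
    · exact fun i j hij => hij
    · intro i hi hq
      rfl
    · exact fun i => Fin.ext rfl
  have hcovX : ∀ (x y : ℕ) (hx : x + 2 ≤ b) (hy : b + σ.1 + y ≤ τ.1 + 1),
      QCov (Zp τ.2 b σ.1 x y) (Zp τ.2 b σ.1 (x + 1) y) := by
    intro x y hx hy
    rw [hZeq x y (by omega) hy, hZeq (x + 1) y hx hy]
    refine ⟨by show σ.1 + x + y + 1 = σ.1 + (x + 1) + y; omega, ⟨fun i => ⟨snat b x i.1, by
      have h2 : i.1 < σ.1 + x + y := i.2
      have h3 := snat_bound (b := b) (x := x) h2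
      show snat b x i.1 < σ.1 + (x + 1) + y
      omega⟩, ?_⟩⟩
    refine isOcc_pat_pat τ.2 _ (hGmono (x + 1) y hx hy).injective _
      (hGmono x y (by omega) hy).injective _ ?_ ?_ ?_
    · exact fun i j hij => snat_lt_snat hij
    · exact fun i hi hq => snat_adj (hqa1 i hq)
    · exact fun i => Fin.ext (gnat_snat hb2 hx)
  have hZleY : ∀ (x y y' : ℕ) (hyy : y ≤ y'), x + 1 ≤ b → b + σ.1 + y' ≤ τ.1 + 1 →
      QLe (Zp τ.2 b σ.1 x y) (Zp τ.2 b σ.1 x y') := by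
    intro x y y' hyy
    induction y', hyy using Nat.le_induction with
    | base => intro _ _; exact Relation.ReflTransGen.refl
    | succ n hn ih =>
        intro hx hy
        exact (ih hx (by omega)).tail (hcovY x n hx hy)
  have hZleX : ∀ (x x' y : ℕ) (hxx : x ≤ x'), x' + 1 ≤ b → b + σ.1 + y ≤ τ.1 + 1 →
      QLe (Zp τ.2 b σ.1 x y) (Zp τ.2 b σ.1 x' y) := by
    intro x x' y hxx
    induction x', hxx using Nat.le_induction with
    | base => intro _ _; exact Relation.ReflTransGen.refl
    | succ n hn ih =>
        intro hx hy
        exact (ih (by omega) hy).tail (hcovX n y (by omega) hy)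
  have hZle : ∀ (x y x' y' : ℕ), x ≤ x' → y ≤ y' → x' + 1 ≤ b → b + σ.1 + y' ≤ τ.1 + 1 →
      QLe (Zp τ.2 b σ.1 x y) (Zp τ.2 b σ.1 x' y') := by
    intro x y x' y' hxx hyy hx' hy'
    exact qle_trans (hZleY x y y' hyy (by omega) hy') (hZleX x x' y' hxx hx' hy')
  have hZ00 : Zp τ.2 b σ.1 0 0 = σ := by
    rw [hZeq 0 0 (by omega) (by omega)]
    have hpe : pat τ.2 (fun i : Fin (σ.1 + 0 + 0) =>
        (⟨gnat b 0 i.1, hcond 0 0 (by omega) (by omega) i.1 i.2⟩ : Fin τ.1)) = σ.2 := by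
      have hfeq : (fun i : Fin (σ.1 + 0 + 0) =>
          (⟨gnat b 0 i.1, hcond 0 0 (by omega) (by omega) i.1 i.2⟩ : Fin τ.1)) = f := by
        funext i
        refine Fin.ext ?_
        show gnat b 0 i.1 = (f i : ℕ)
        rcases Nat.eq_zero_or_pos i.1 with h0i | h1i
        · have he : i = ⟨0, hk1⟩ := Fin.ext h0i
          rw [h0i, he, hf0]
          exact gnat_zero_zero hb2
        · have hv := hfi i.1 i.2 h1i
          rw [Fin.eta] at hv
          rw [hv]
          exact gnat_zero_pos h1i
      rw [hfeq]
      exact hσpat.symm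
    exact congrArg (Sigma.mk σ.1) hpe
  have hZtop : Zp τ.2 b σ.1 (b - 1) (τ.1 + 1 - (b + σ.1)) = τ := by
    rw [hZeq (b - 1) (τ.1 + 1 - (b + σ.1)) (by omega) (by omega)]
    refine qperm_ext _ _ (by omega) ?_
    intro i j
    exact (pat_lt_iff τ.2 _ (hGmono _ _ (by omega) (by omega)).injective i j).trans
      (perm_lt_congr τ.2 (Fin.ext (gnat_top hb2 i.1)) (Fin.ext (gnat_top hb2 j.1)))
  have hclass : ∀ z : QPerm, QLe σ z → QLe z τ →
      ∃ x y, (x + 1 ≤ b) ∧ (b + σ.1 + y ≤ τ.1 + 1) ∧ σ.1 + x + y = z.1 ∧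
        z = Zp τ.2 b σ.1 x y := by
    intro z hσz hzτ
    obtain ⟨F, hF⟩ := qle_exists_occ hσz
    obtain ⟨G, hG⟩ := qle_exists_occ hzτ
    have hm : σ.1 ≤ z.1 := by
      have := Fintype.card_le_of_injective F hF.1.injective
      simpa using this
    have hmlt : 1 < z.1 := by omega
    have hz0 : 0 < z.1 := by omega
    have hcompf : (fun i => G (F i)) = f := huniq _ (hF.qa_comp hG)
    have hFblock := isOcc_block hF hklt
    have hGblock := isOcc_block hG hmlt
    obtain ⟨d, hd⟩ : ∃ d, d = (F ⟨1, hklt⟩ : ℕ) := ⟨_, rfl⟩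
    obtain ⟨c, hc⟩ : ∃ c, c = (G ⟨1, hmlt⟩ : ℕ) := ⟨_, rfl⟩
    obtain ⟨p0, hp0⟩ : ∃ p, p = (G ⟨0, hz0⟩ : ℕ) := ⟨_, rfl⟩
    obtain ⟨q0, hq0⟩ : ∃ q, q = (F ⟨0, hk1⟩ : ℕ) := ⟨_, rfl⟩
    have hd1 : 1 ≤ d := by
      have hlt : (⟨0, hk1⟩ : Fin σ.1) < ⟨1, hklt⟩ := Fin.mk_lt_mk.2 Nat.zero_lt_one
      have h2 : (F ⟨0, hk1⟩ : ℕ) < (F ⟨1, hklt⟩ : ℕ) := hF.1 hlt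
      omega
    have hp0c : p0 < c := by
      have hlt : (⟨0, hz0⟩ : Fin z.1) < ⟨1, hmlt⟩ := Fin.mk_lt_mk.2 Nat.zero_lt_one
      have h2 : (G ⟨0, hz0⟩ : ℕ) < (G ⟨1, hmlt⟩ : ℕ) := hG.1 hlt
      omega
    have hdlt : d < z.1 := by rw [hd]; exact (F ⟨1, hklt⟩).2
    have hFd : F ⟨1, hklt⟩ = ⟨d, hdlt⟩ := Fin.ext hd.symm
    have hcd : c + (d - 1) = b := by
      have h2 : (G (F ⟨1, hklt⟩) : ℕ) = (f ⟨1, hklt⟩ : ℕ) :=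
        congrArg Fin.val (congrFun hcompf ⟨1, hklt⟩)
      rw [hFd] at h2
      have h3 := hGblock d hdlt hd1
      omega
    have hc0 : (G (F ⟨0, hk1⟩) : ℕ) = 1 := by
      have h2 : (G (F ⟨0, hk1⟩) : ℕ) = (f ⟨0, hk1⟩ : ℕ) :=
        congrArg Fin.val (congrFun hcompf ⟨0, hk1⟩)
      rw [hf0] at h2
      exact h2
    have hs1 : σ.1 - 1 < σ.1 := by omega
    have hzs1 : z.1 - 1 < z.1 := by omega
    have hFtop : (F ⟨σ.1 - 1, hs1⟩ : ℕ) = d + (σ.1 - 1 - 1) := by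
      have := hFblock (σ.1 - 1) hs1 (by omega)
      omega
    have hFtoplt : (F ⟨σ.1 - 1, hs1⟩ : ℕ) < z.1 := (F ⟨σ.1 - 1, hs1⟩).2
    have hGtop : (G ⟨z.1 - 1, hzs1⟩ : ℕ) = c + (z.1 - 1 - 1) := by
      have := hGblock (z.1 - 1) hzs1 (by omega)
      omega
    have hGtoplt : (G ⟨z.1 - 1, hzs1⟩ : ℕ) < τ.1 := (G ⟨z.1 - 1, hzs1⟩).2
    rcases Nat.eq_zero_or_pos q0 with hq00 | hq01
    · have hF0 : F ⟨0, hk1⟩ = ⟨0, hz0⟩ := Fin.ext (by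
        show (F ⟨0, hk1⟩ : ℕ) = 0
        omega)
      have hp01 : p0 = 1 := by
        rw [hF0] at hc0
        omega
      have hc2 : 2 ≤ c := by omega
      have hcb : c ≤ b := by omega
      have hx : (b - c) + 1 ≤ b := by omega
      have hy : b + σ.1 + (z.1 - (σ.1 + (b - c))) ≤ τ.1 + 1 := by omega
      have hlen : σ.1 + (b - c) + (z.1 - (σ.1 + (b - c))) = z.1 := by omega
      refine ⟨b - c, z.1 - (σ.1 + (b - c)), hx, hy, hlen, ?_⟩
      rw [hZeq (b - c) (z.1 - (σ.1 + (b - c))) hx hy]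
      refine qperm_ext z.2 _ hlen.symm ?_
      intro i j
      have hGval : ∀ l : Fin z.1, (G l : ℕ) = gnat b (b - c) l.1 := by
        intro l
        rcases Nat.eq_zero_or_pos l.1 with h0l | h1l
        · have hel : l = ⟨0, hz0⟩ := Fin.ext h0l
          rw [hel]
          have e0 : ((⟨0, hz0⟩ : Fin z.1) : ℕ) = 0 := rfl
          rw [e0, gnat_at_zero (by omega)]
          omega
        · have hbl := hGblock l.1 l.2 h1l
          rw [Fin.eta] at hbl
          rw [gnat_pos h1l]
          omega
      exact (hG.2.1 i j).trans ((perm_lt_congr τ.2 (Fin.ext (hGval i)) (Fin.ext (hGval j))).trans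
        (pat_lt_iff τ.2 _ (hGmono _ _ hx hy).injective _ _).symm)
    · have hq0lt : q0 < z.1 := by rw [hq0]; exact (F ⟨0, hk1⟩).2
      have hF0 : F ⟨0, hk1⟩ = ⟨q0, hq0lt⟩ := Fin.ext hq0.symm
      have h2 : c + (q0 - 1) = 1 := by
        rw [hF0] at hc0
        have h3 := hGblock q0 hq0lt hq01
        omega
      have hc1 : c = 1 := by omega
      have hdb : d = b := by omega
      have hx : (b - 1) + 1 ≤ b := by omega
      have hy : b + σ.1 + (z.1 - (σ.1 + (b - 1))) ≤ τ.1 + 1 := by omega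
      have hlen : σ.1 + (b - 1) + (z.1 - (σ.1 + (b - 1))) = z.1 := by omega
      refine ⟨b - 1, z.1 - (σ.1 + (b - 1)), hx, hy, hlen, ?_⟩
      rw [hZeq (b - 1) (z.1 - (σ.1 + (b - 1))) hx hy]
      refine qperm_ext z.2 _ hlen.symm ?_
      intro i j
      have hGval : ∀ l : Fin z.1, (G l : ℕ) = gnat b (b - 1) l.1 := by
        intro l
        rw [gnat_top hb2]
        rcases Nat.eq_zero_or_pos l.1 with h0l | h1l
        · have hel : l = ⟨0, hz0⟩ := Fin.ext h0l
          rw [hel]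
          have e0 : ((⟨0, hz0⟩ : Fin z.1) : ℕ) = 0 := rfl
          rw [e0]
          omega
        · have hbl := hGblock l.1 l.2 h1l
          rw [Fin.eta] at hbl
          omega
      exact (hG.2.1 i j).trans ((perm_lt_congr τ.2 (Fin.ext (hGval i)) (Fin.ext (hGval j))).trans
        (pat_lt_iff τ.2 _ (hGmono _ _ hx hy).injective _ _).symm)
  have hconv : ∀ x y x' y', x + 1 ≤ b → b + σ.1 + y ≤ τ.1 + 1 → x' + 1 ≤ b →
      b + σ.1 + y' ≤ τ.1 + 1 →
      QLe (Zp τ.2 b σ.1 x y) (Zp τ.2 b σ.1 x' y') → x ≤ x' ∧ y ≤ y' := by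
    intro x y x' y' hx hy hx' hy' hq
    rw [hZeq x y hx hy, hZeq x' y' hx' hy'] at hq
    obtain ⟨u, hu⟩ := qle_exists_occ hq
    have hmlt2 : 1 < σ.1 + x + y := by omega
    have hub := isOcc_block hu hmlt2
    obtain ⟨u1, hu1⟩ : ∃ u1, u1 = (u ⟨1, hmlt2⟩ : ℕ) := ⟨_, rfl⟩
    have h0b : 0 < σ.1 + x + y := by omega
    have hu11 : 1 ≤ u1 := by
      have hlt : (⟨0, h0b⟩ : Fin (σ.1 + x + y)) < ⟨1, hmlt2⟩ :=
        Fin.mk_lt_mk.2 Nat.zero_lt_one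
      have h2 : (u ⟨0, h0b⟩ : ℕ) < (u ⟨1, hmlt2⟩ : ℕ) := hu.1 hlt
      omega
    have hcomp2 : (fun i : Fin σ.1 =>
        (fun l : Fin (σ.1 + x' + y') =>
          (⟨gnat b x' l.1, hcond x' y' hx' hy' l.1 l.2⟩ : Fin τ.1))
        (u ((fun i : Fin σ.1 =>
          (⟨wnat b x i.1, wnat_bound hk i.2⟩ : Fin (σ.1 + x + y))) i))) = f :=
      huniq _ (((hWocc x y hx hy).qa_comp hu).qa_comp (hGocc x' y' hx' hy'))
    have hbound : x + 1 < σ.1 + x + y := by omega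
    have hW1 : (fun i : Fin σ.1 =>
        (⟨wnat b x i.1, wnat_bound hk i.2⟩ : Fin (σ.1 + x + y))) ⟨1, hklt⟩
        = ⟨x + 1, hbound⟩ := Fin.ext (by
          show wnat b x 1 = x + 1
          exact wnat_one)
    have h4 : gnat b x' ((u ((fun i : Fin σ.1 =>
        (⟨wnat b x i.1, wnat_bound hk i.2⟩ : Fin (σ.1 + x + y))) ⟨1, hklt⟩)) : ℕ)
        = (f ⟨1, hklt⟩ : ℕ) := congrArg Fin.val (congrFun hcomp2 ⟨1, hklt⟩)
    rw [hW1] at h4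
    have h6 : (u ⟨x + 1, hbound⟩ : ℕ) = u1 + (x + 1 - 1) := by
      rw [hu1]
      exact hub (x + 1) hbound (by omega)
    rw [h6] at h4
    have hgp : gnat b x' (u1 + (x + 1 - 1)) = b - x' + (u1 + (x + 1 - 1) - 1) :=
      gnat_pos (by omega)
    have hxx : x ≤ x' := by omega
    refine ⟨hxx, ?_⟩
    have hbound2 : σ.1 + x + y - 1 < σ.1 + x + y := by omega
    have h7 : (u ⟨σ.1 + x + y - 1, hbound2⟩ : ℕ) = u1 + (σ.1 + x + y - 1 - 1) := by
      rw [hu1]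
      exact hub (σ.1 + x + y - 1) hbound2 (by omega)
    have h8 : (u ⟨σ.1 + x + y - 1, hbound2⟩ : ℕ) < σ.1 + x' + y' :=
      (u ⟨σ.1 + x + y - 1, hbound2⟩).2
    omega
  have hinjZ : ∀ x y x' y', x + 1 ≤ b → b + σ.1 + y ≤ τ.1 + 1 → x' + 1 ≤ b →
      b + σ.1 + y' ≤ τ.1 + 1 → Zp τ.2 b σ.1 x y = Zp τ.2 b σ.1 x' y' →
      x = x' ∧ y = y' := by
    intro x y x' y' hx hy hx' hy' he
    have h1 : QLe (Zp τ.2 b σ.1 x y) (Zp τ.2 b σ.1 x' y') := by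
      rw [he]
      exact Relation.ReflTransGen.refl
    have h2 : QLe (Zp τ.2 b σ.1 x' y') (Zp τ.2 b σ.1 x y) := by
      rw [he]
      exact Relation.ReflTransGen.refl
    have c1 := hconv x y x' y' hx hy hx' hy' h1
    have c2 := hconv x' y' x y hx' hy' hx hy h2
    omega
  have hmu : ∀ t x y, x + 1 ≤ b → b + σ.1 + y ≤ τ.1 + 1 → x + y = t →
      qMu σ (Zp τ.2 b σ.1 x y) = mval x * mval y := by
    intro t
    induction t using Nat.strong_induction_on with
    | _ t ih =>
      intro x y hx hy hxy
      rcases Nat.eq_zero_or_pos (x + y) with h00 | hpos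
      · have hx0 : x = 0 := by omega
        have hy0 : y = 0 := by omega
        subst hx0
        subst hy0
        rw [hZ00, qMu_self]
        simp [mval]
      · have hne : σ ≠ Zp τ.2 b σ.1 x y := by
          intro he
          have h2 := congrArg Sigma.fst he
          rw [Zp_fst] at h2
          omega
        rw [qMu_rec σ _ hne]
        have hset : (permsUpTo (Zp τ.2 b σ.1 x y).1).filter
              (fun z => QLe σ z ∧ QLe z (Zp τ.2 b σ.1 x y) ∧ z ≠ Zp τ.2 b σ.1 x y)
            = ((Finset.range (x + 1) ×ˢ Finset.range (y + 1)).erase (x, y)).image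
              (fun p => Zp τ.2 b σ.1 p.1 p.2) := by
          ext z
          constructor
          · intro hzmem
            obtain ⟨hmem, hσz, hzZ, hzne⟩ := Finset.mem_filter.1 hzmem
            have hzτ : QLe z τ := by
              refine qle_trans hzZ ?_
              have h3 := hZle x y (b - 1) (τ.1 + 1 - (b + σ.1)) (by omega) (by omega)
                (by omega) (by omega)
              rw [hZtop] at h3
              exact h3
            obtain ⟨x'', y'', hx'', hy'', hlen'', hzeq⟩ := hclass z hσz hzτ
            have hle2 : QLe (Zp τ.2 b σ.1 x'' y'') (Zp τ.2 b σ.1 x y) := by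
              rw [← hzeq]
              exact hzZ
            have hcc := hconv x'' y'' x y hx'' hy'' hx hy hle2
            refine Finset.mem_image.2 ⟨(x'', y''), Finset.mem_erase.2 ⟨?_,
              Finset.mem_product.2 ⟨Finset.mem_range.2 (by omega),
                Finset.mem_range.2 (by omega)⟩⟩, hzeq.symm⟩
            intro he
            have hx2 : x'' = x := congrArg Prod.fst he
            have hy2 : y'' = y := congrArg Prod.snd he
            apply hzne
            rw [hzeq, hx2, hy2]
          · intro hz
            obtain ⟨p, hp, hpz⟩ := Finset.mem_image.1 hz
            obtain ⟨hpne, hpmem⟩ := Finset.mem_erase.1 hp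
            obtain ⟨hp1, hp2⟩ := Finset.mem_product.1 hpmem
            rw [Finset.mem_range] at hp1 hp2
            refine Finset.mem_filter.2 ⟨?_, ?_, ?_, ?_⟩
            · refine Finset.mem_sigma.2 ⟨Finset.mem_range.2 ?_, Finset.mem_univ _⟩
              have e1 : z.1 = σ.1 + p.1 + p.2 := by rw [← hpz, Zp_fst]
              have e2 : (Zp τ.2 b σ.1 x y).1 = σ.1 + x + y := Zp_fst τ.2 b σ.1 x y
              omega
            · rw [← hpz]
              have h00 : QLe (Zp τ.2 b σ.1 0 0) (Zp τ.2 b σ.1 p.1 p.2) :=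
                hZle 0 0 p.1 p.2 (by omega) (by omega) (by omega) (by omega)
              rw [hZ00] at h00
              exact h00
            · rw [← hpz]
              exact hZle p.1 p.2 x y (by omega) (by omega) (by omega) (by omega)
            · rw [← hpz]
              intro he
              have h3 := hinjZ p.1 p.2 x y (by omega) (by omega) hx hy he
              exact hpne (Prod.ext_iff.2 ⟨h3.1, h3.2⟩)
        have hinjon : ∀ p ∈ (Finset.range (x + 1) ×ˢ Finset.range (y + 1)).erase (x, y),
            ∀ q ∈ (Finset.range (x + 1) ×ˢ Finset.range (y + 1)).erase (x, y),
            Zp τ.2 b σ.1 p.1 p.2 = Zp τ.2 b σ.1 q.1 q.2 → p = q := by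
          intro p hp q hq he
          obtain ⟨hpne, hpmem⟩ := Finset.mem_erase.1 hp
          obtain ⟨hp1, hp2⟩ := Finset.mem_product.1 hpmem
          rw [Finset.mem_range] at hp1 hp2
          obtain ⟨hqne, hqmem⟩ := Finset.mem_erase.1 hq
          obtain ⟨hq1, hq2⟩ := Finset.mem_product.1 hqmem
          rw [Finset.mem_range] at hq1 hq2
          have h3 := hinjZ p.1 p.2 q.1 q.2 (by omega) (by omega) (by omega) (by omega) he
          exact Prod.ext_iff.2 ⟨h3.1, h3.2⟩
        rw [hset, Finset.sum_image hinjon]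
        have hterm : ∀ p ∈ (Finset.range (x + 1) ×ˢ Finset.range (y + 1)).erase (x, y),
            qMu σ (Zp τ.2 b σ.1 p.1 p.2) = mval p.1 * mval p.2 := by
          intro p hp
          obtain ⟨hpne, hpmem⟩ := Finset.mem_erase.1 hp
          obtain ⟨hp1, hp2⟩ := Finset.mem_product.1 hpmem
          rw [Finset.mem_range] at hp1 hp2
          have hlt : p.1 + p.2 < t := by
            rcases Nat.lt_or_ge (p.1 + p.2) (x + y) with h | h
            · omega
            · exfalso
              apply hpne
              have h4 : p.1 = x ∧ p.2 = y := by omega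
              exact Prod.ext_iff.2 h4
          exact ih (p.1 + p.2) (by omega) p.1 p.2 (by omega) (by omega) rfl
        rw [Finset.sum_congr rfl hterm]
        have hsum : ∑ p ∈ (Finset.range (x + 1) ×ˢ Finset.range (y + 1)).erase (x, y),
            mval p.1 * mval p.2
            = (∑ i ∈ Finset.range (x + 1), mval i) * (∑ j ∈ Finset.range (y + 1), mval j)
              - mval x * mval y := by
          rw [Finset.sum_erase_eq_sub (Finset.mem_product.2
            ⟨Finset.mem_range.2 (by omega), Finset.mem_range.2 (by omega)⟩)]
          rw [Finset.sum_product, Finset.sum_mul_sum]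
        rw [hsum, mval_sum, mval_sum]
        have hzero : (if x = 0 then (1 : ℤ) else 0) * (if y = 0 then (1 : ℤ) else 0) = 0 := by
          rcases Nat.eq_zero_or_pos x with h | h
          · have hy0 : y ≠ 0 := by omega
            simp [h, hy0]
          · have hx0 : x ≠ 0 := by omega
            simp [hx0]
        rw [hzero]
        ring
  have hmain := hmu ((b - 1) + (τ.1 + 1 - (b + σ.1))) (b - 1) (τ.1 + 1 - (b + σ.1))
    (by omega) (by omega) rfl
  rw [hZtop] at hmain
  constructor
  · intro hrank
    have hb3 : b - 1 = 1 := by omega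
    have hq1 : τ.1 + 1 - (b + σ.1) = 1 := by omega
    rw [hmain, hb3, hq1]
    simp [mval]
  · intro hrank
    rw [hmain]
    have h2 : 2 ≤ b - 1 ∨ 2 ≤ τ.1 + 1 - (b + σ.1) := by omega
    rcases h2 with h | h
    · have e1 : mval (b - 1) = 0 := by
        simp only [mval]
        rw [if_neg (by omega), if_neg (by omega)]
      rw [e1, zero_mul]
    · have e1 : mval (τ.1 + 1 - (b + σ.1)) = 0 := by
        simp only [mval]
        rw [if_neg (by omega), if_neg (by omega)]
      rw [e1, mul_zero]
end

section
/- In the quasi-consecutive pattern poset, suppose σ occurs exactly once in τ = a_1 a_2 ⋯ a_n, the occurrence is consecutive at the end of τ (i.e., σ is order-isomorphic to a_k a_{k+1} ⋯ a_n for some k > 2), a_1 and a_2 are not consecutive integers, and the occurrence involves neither a_1 nor a_2. Then the interval [σ, τ] has exactly two coatoms, namely the flattenings of τ with a_1 removed and with a_2 removed. -/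
open scoped Classical

section AuxLemmas

/-- A strictly monotone map on `Fin` grows at least as fast as the identity. -/
lemma strictMono_le_apply {k n : ℕ} (f : Fin k → Fin n) (hf : StrictMono f) :
    ∀ (i : ℕ) (h : i < k), i ≤ (f ⟨i, h⟩ : ℕ) := by
  intro i
  induction i with
  | zero => intro h; exact Nat.zero_le _
  | succ i ih =>
    intro h
    have h1 : i < k := Nat.lt_of_succ_lt h
    have h2 : f ⟨i, h1⟩ < f ⟨i + 1, h⟩ := hf (by simp [Fin.lt_def])
    have h3 := ih h1
    rw [Fin.lt_def] at h2
    omega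

lemma range_inj' {k n : ℕ} {f g : Fin k → Fin n} (hf : StrictMono f) (hg : StrictMono g)
    (h : Set.range f = Set.range g) : f = g :=
  (@StrictMono.range_inj (Fin k) (Fin n) _ _ (inferInstance : WellFoundedLT (Fin k))
    f g hf hg).mp h

/-- Two permutations of `Fin k` inducing the same comparison relation are equal. -/
lemma perm_eq_of_cmp {k : ℕ} (σ τ : Equiv.Perm (Fin k))
    (h : ∀ i j, σ i < σ j ↔ τ i < τ j) : σ = τ := by
  have hu : StrictMono (fun x => τ (σ.symm x)) := by
    intro x y hxy
    exact (h (σ.symm x) (σ.symm y)).mp (by simpa using hxy)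
  have hrange : Set.range (fun x => τ (σ.symm x)) = Set.range (id : Fin k → Fin k) := by
    rw [Set.range_id]
    exact Set.range_eq_univ.mpr fun y => ⟨σ (τ.symm y), by simp⟩
  have hid : StrictMono (id : Fin k → Fin k) := strictMono_id
  have := range_inj' hu hid hrange
  ext i
  have h2 := congrFun this (σ i)
  exact congrArg Fin.val (by simpa using h2.symm)

/-- The flattening (pattern) of `τ` along an injective choice of positions `g`. -/
noncomputable def flatten {k n : ℕ} (τ : Equiv.Perm (Fin n)) (g : Fin k → Fin n) :
    Equiv.Perm (Fin k) := (Tuple.sort (fun i => τ (g i)))⁻¹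

lemma flatten_lt_iff {k n : ℕ} (τ : Equiv.Perm (Fin n)) (g : Fin k → Fin n)
    (hg : Function.Injective g) (i j : Fin k) :
    flatten τ g i < flatten τ g j ↔ τ (g i) < τ (g j) := by
  set v : Fin k → Fin n := fun i => τ (g i) with hv
  have hinj : Function.Injective (v ∘ Tuple.sort v) :=
    (τ.injective.comp hg).comp (Tuple.sort v).injective
  have hsm : StrictMono (v ∘ Tuple.sort v) :=
    (Tuple.monotone_sort v).strictMono_of_injective hinj
  have h1 : ∀ x : Fin k, v x = (v ∘ Tuple.sort v) ((Tuple.sort v)⁻¹ x) := by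
    intro x; simp
  rw [show τ (g i) = v i from rfl, show τ (g j) = v j from rfl, h1 i, h1 j, hsm.lt_iff_lt]
  rfl

/-- The strictly monotone map `Fin n' → Fin (n'+1)` skipping position `m`. -/
def delMap (n' m : ℕ) : Fin n' → Fin (n' + 1) := fun j =>
  if (j : ℕ) < m then ⟨(j : ℕ), Nat.lt_succ_of_lt j.isLt⟩
  else ⟨(j : ℕ) + 1, Nat.succ_lt_succ j.isLt⟩

lemma delMap_val (n' m : ℕ) (j : Fin n') :
    (delMap n' m j : ℕ) = if (j : ℕ) < m then (j : ℕ) else (j : ℕ) + 1 := by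
  unfold delMap; split <;> rfl

lemma delMap_strictMono {n' m : ℕ} : StrictMono (delMap n' m) := by
  intro a b hab
  rw [Fin.lt_def] at hab ⊢
  rw [delMap_val, delMap_val]
  split <;> split <;> omega

lemma delMap_range {n' m : ℕ} (hm : m ≤ n') (q : Fin (n' + 1)) :
    q ∈ Set.range (delMap n' m) ↔ (q : ℕ) ≠ m := by
  constructor
  · rintro ⟨j, rfl⟩
    rw [delMap_val]
    split <;> omega
  · intro hq
    have hq' := q.isLt
    rcases Nat.lt_or_ge (q : ℕ) m with h | h
    · refine ⟨⟨(q : ℕ), by omega⟩, Fin.ext ?_⟩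
      rw [delMap_val]
      split <;> simp_all
    · refine ⟨⟨(q : ℕ) - 1, by omega⟩, Fin.ext ?_⟩
      rw [delMap_val]
      split <;> simp_all <;> omega

lemma isOcc_delMap {n' : ℕ} (τ : Equiv.Perm (Fin (n' + 1))) (m : ℕ) (hm : m ≤ 1) :
    IsOcc qa (flatten τ (delMap n' m)) τ (delMap n' m) := by
  refine ⟨delMap_strictMono, fun i j =>
    flatten_lt_iff τ _ delMap_strictMono.injective i j, ?_⟩
  intro i h ha
  have hi : i ≠ 0 := by
    intro hi0; rw [hi0] at ha; simp [qa] at ha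
  rw [delMap_val, delMap_val]
  simp only [Fin.val_mk]
  split <;> split <;> omega

lemma isOcc_id_s14 {k : ℕ} (σ : Equiv.Perm (Fin k)) : IsOcc qa σ σ id := by
  refine ⟨strictMono_id, fun i j => Iff.rfl, ?_⟩
  intro i h _; rfl

lemma isOcc_comp {k l n : ℕ} {σ : Equiv.Perm (Fin k)} {ρ : Equiv.Perm (Fin l)}
    {τ : Equiv.Perm (Fin n)} {f : Fin k → Fin l} {g : Fin l → Fin n}
    (hf : IsOcc qa σ ρ f) (hg : IsOcc qa ρ τ g) : IsOcc qa σ τ (g ∘ f) := by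
  refine ⟨hg.1.comp hf.1, fun i j => (hf.2.1 i j).trans (hg.2.1 _ _), ?_⟩
  intro i h ha
  have hi : i ≠ 0 := by
    intro hi0; rw [hi0] at ha; simp [qa] at ha
  have h2 := hf.2.2 i h ha
  have hfi1 : (f ⟨i, Nat.lt_of_succ_lt h⟩ : ℕ) + 1 < l := by
    have := (f ⟨i + 1, h⟩).isLt; omega
  have hge : i ≤ (f ⟨i, Nat.lt_of_succ_lt h⟩ : ℕ) :=
    strictMono_le_apply f hf.1 i (Nat.lt_of_succ_lt h)
  have ha' : qa ((f ⟨i, Nat.lt_of_succ_lt h⟩ : ℕ) + 1) = false := by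
    simp [qa]; omega
  have h3 := hg.2.2 (f ⟨i, Nat.lt_of_succ_lt h⟩ : ℕ) hfi1 ha'
  have e1 : (⟨(f ⟨i, Nat.lt_of_succ_lt h⟩ : ℕ) + 1, hfi1⟩ : Fin l) = f ⟨i + 1, h⟩ :=
    Fin.ext h2.symm
  have e2 : (⟨(f ⟨i, Nat.lt_of_succ_lt h⟩ : ℕ),
      Nat.lt_of_succ_lt hfi1⟩ : Fin l) = f ⟨i, Nat.lt_of_succ_lt h⟩ := Fin.ext rfl
  rw [e1, e2] at h3
  simpa using h3

lemma qle_occ {σ τ : QPerm} (h : QLe σ τ) : ∃ f : Fin σ.1 → Fin τ.1, IsOcc qa σ.2 τ.2 f := by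
  induction h with
  | refl => exact ⟨id, isOcc_id_s14 _⟩
  | tail hab hbc ih =>
    obtain ⟨f, hf⟩ := ih
    obtain ⟨g, hg⟩ := hbc.2
    exact ⟨g ∘ f, isOcc_comp hf hg⟩

lemma suffix_qle (d : ℕ) : ∀ (k : ℕ) (σp : Equiv.Perm (Fin k)) (τp : Equiv.Perm (Fin (k + d)))
    (_ : ∀ i j : Fin k, σp i < σp j ↔
      τp ⟨(i : ℕ) + d, Nat.add_lt_add_right i.isLt d⟩ <
      τp ⟨(j : ℕ) + d, Nat.add_lt_add_right j.isLt d⟩),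
    QLe ⟨k, σp⟩ ⟨k + d, τp⟩ := by
  induction d with
  | zero =>
    intro k σp τp hiff
    have e : ∀ i : Fin k, (⟨(i : ℕ) + 0, Nat.add_lt_add_right i.isLt 0⟩ : Fin (k + 0)) = i :=
      fun i => Fin.ext rfl
    have h2 : σp = τp := perm_eq_of_cmp σp τp (fun i j => by
      rw [hiff i j, e i, e j])
    exact h2 ▸ Relation.ReflTransGen.refl
  | succ d ih =>
    intro k σp τp hiff
    have hdm : ∀ x : Fin (k + d), delMap (k + d) 0 x = ⟨(x : ℕ) + 1, Nat.succ_lt_succ x.isLt⟩ :=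
      fun x => Fin.ext (by rw [delMap_val]; simp)
    have hocc : IsOcc qa (flatten τp (delMap (k + d) 0)) τp (delMap (k + d) 0) :=
      isOcc_delMap τp 0 (by omega)
    have hcov : QCov ⟨k + d, flatten τp (delMap (k + d) 0)⟩ ⟨k + (d + 1), τp⟩ :=
      ⟨rfl, ⟨delMap (k + d) 0, hocc⟩⟩
    have hle' : QLe ⟨k, σp⟩ ⟨k + d, flatten τp (delMap (k + d) 0)⟩ := by
      refine ih k σp _ (fun i j => ?_)
      have h4 := flatten_lt_iff τp (delMap (k + d) 0) delMap_strictMono.injective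
        ⟨(i : ℕ) + d, Nat.add_lt_add_right i.isLt d⟩
        ⟨(j : ℕ) + d, Nat.add_lt_add_right j.isLt d⟩
      rw [hdm, hdm] at h4
      exact (hiff i j).trans h4.symm
    exact Relation.ReflTransGen.tail hle' hcov

end AuxLemmas

lemma delMap_mk (n' m a : ℕ) (h : a < n') :
    (delMap n' m ⟨a, h⟩ : ℕ) = if a < m then a else a + 1 := by
  rw [delMap_val]

/-- If `σ` occurs exactly once in `τ = a₁a₂⋯aₙ`, consecutively at the end of
`τ` (hence starting after position 2), `a₁` and `a₂` are not consecutive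
integers, then `[σ,τ]` has exactly two coatoms: the flattenings of `τ` with
`a₁` removed and with `a₂` removed. -/
theorem two_coatoms (σ τ : QPerm) (hle : QLe σ τ) (hσ : 0 < σ.1)
    (f : Fin σ.1 → Fin τ.1) (hf : IsOcc qa σ.2 τ.2 f)
    (huniq : ∀ g : Fin σ.1 → Fin τ.1, IsOcc qa σ.2 τ.2 g → g = f)
    (hc : ConsecOcc f) (hend : Involves f (τ.1 - 1))
    (h0 : ¬ Involves f 0) (h1 : ¬ Involves f 1)
    (hnc : NotConsecFirstTwo τ) :
    ∃ ρ₀ ρ₁ : QPerm, ρ₀ ≠ ρ₁ ∧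
      (∃ g : Fin ρ₀.1 → Fin τ.1, IsOcc qa ρ₀.2 τ.2 g ∧ ρ₀.1 + 1 = τ.1 ∧
        ∀ q : Fin τ.1, q ∉ Set.range g ↔ (q : ℕ) = 0) ∧
      (∃ g : Fin ρ₁.1 → Fin τ.1, IsOcc qa ρ₁.2 τ.2 g ∧ ρ₁.1 + 1 = τ.1 ∧
        ∀ q : Fin τ.1, q ∉ Set.range g ↔ (q : ℕ) = 1) ∧
      ∀ ρ : QPerm, (QLe σ ρ ∧ QCov ρ τ) ↔ ρ = ρ₀ ∨ ρ = ρ₁ := by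
  obtain ⟨k, σp⟩ := σ
  obtain ⟨n, τp⟩ := τ
  have hk0 : 0 < k := hσ
  have hkn : k ≤ n := by
    have := Fintype.card_le_of_injective f hf.1.injective
    simpa using this
  have hstep : ∀ (i : ℕ) (h : i < k), (f ⟨i, h⟩ : ℕ) = (f ⟨0, hk0⟩ : ℕ) + i := by
    intro i
    induction i with
    | zero => intro h; rfl
    | succ i ih =>
      intro h
      rw [hc i h, ih (Nat.lt_of_succ_lt h)]
      omega
  obtain ⟨j0, hj0⟩ := hend
  have hj0n : (f j0 : ℕ) = n - 1 := hj0
  have hjlt : (j0 : ℕ) < k := j0.isLt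
  have hjval : (f j0 : ℕ) = (f ⟨0, hk0⟩ : ℕ) + (j0 : ℕ) := by
    have h2 := hstep (j0 : ℕ) hjlt
    rwa [show (⟨(j0 : ℕ), hjlt⟩ : Fin k) = j0 from Fin.ext rfl] at h2
  have hk1 : k - 1 < k := by omega
  have hlastval := hstep (k - 1) hk1
  have hflt : (f ⟨k - 1, hk1⟩ : ℕ) < n := (f ⟨k - 1, hk1⟩).isLt
  have hn1 : 0 < n := by omega
  have hf0 : (f ⟨0, hk0⟩ : ℕ) = n - k := by omega
  have hf0ne0 : (f ⟨0, hk0⟩ : ℕ) ≠ 0 := fun h => h0 ⟨⟨0, hk0⟩, h⟩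
  have hf0ne1 : (f ⟨0, hk0⟩ : ℕ) ≠ 1 := fun h => h1 ⟨⟨0, hk0⟩, h⟩
  obtain ⟨d, rfl⟩ : ∃ d, n = (k + d) + 1 := ⟨n - k - 1, by omega⟩
  have hd1 : 1 ≤ d := by omega
  refine ⟨⟨k + d, flatten τp (delMap (k + d) 0)⟩, ⟨k + d, flatten τp (delMap (k + d) 1)⟩,
    ?_, ?_, ?_, ?_⟩
  · -- ρ₀ ≠ ρ₁
    intro hcontra
    have heq : flatten τp (delMap (k + d) 0) = flatten τp (delMap (k + d) 1) := by
      injection hcontra with h2 h3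
    have hb0 : (0 : ℕ) < k + d + 1 := by omega
    have hb1 : (1 : ℕ) < k + d + 1 := by omega
    have hnc' := hnc ⟨0, hb0⟩ ⟨1, hb1⟩ rfl rfl
    have hne : (τp ⟨0, hb0⟩ : ℕ) ≠ (τp ⟨1, hb1⟩ : ℕ) := by
      intro h
      have h2 : (⟨0, hb0⟩ : Fin (k + d + 1)) = ⟨1, hb1⟩ := τp.injective (Fin.ext h)
      have := congrArg Fin.val h2
      simp at this
    set x := (τp ⟨0, hb0⟩ : ℕ) with hx
    set y := (τp ⟨1, hb1⟩ : ℕ) with hy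
    have hxlt : x < k + d + 1 := (τp ⟨0, hb0⟩).isLt
    have hylt : y < k + d + 1 := (τp ⟨1, hb1⟩).isLt
    set v : ℕ := min x y + 1 with hv
    have hvlt : v < k + d + 1 := by omega
    set p : Fin (k + d + 1) := τp.symm ⟨v, hvlt⟩ with hpdef
    have hpv : (τp p : ℕ) = v := by rw [hpdef, Equiv.apply_symm_apply]
    have hp0 : (p : ℕ) ≠ 0 := by
      intro h
      have : p = ⟨0, hb0⟩ := Fin.ext h
      rw [this] at hpv
      omega
    have hp1 : (p : ℕ) ≠ 1 := by
      intro h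
      have : p = ⟨1, hb1⟩ := Fin.ext h
      rw [this] at hpv
      omega
    have hplt := p.isLt
    have hA := flatten_lt_iff τp (delMap (k + d) 0) delMap_strictMono.injective
      ⟨0, by omega⟩ ⟨(p : ℕ) - 1, by omega⟩
    have hB := flatten_lt_iff τp (delMap (k + d) 1) delMap_strictMono.injective
      ⟨0, by omega⟩ ⟨(p : ℕ) - 1, by omega⟩
    have e1 : delMap (k + d) 0 ⟨0, by omega⟩ = (⟨1, hb1⟩ : Fin (k + d + 1)) :=
      Fin.ext (by rw [delMap_mk]; simp)
    have e2 : delMap (k + d) 0 ⟨(p : ℕ) - 1, by omega⟩ = p :=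
      Fin.ext (by rw [delMap_mk]; split <;> omega)
    have e3 : delMap (k + d) 1 ⟨0, by omega⟩ = (⟨0, hb0⟩ : Fin (k + d + 1)) :=
      Fin.ext (by rw [delMap_mk]; simp)
    have e4 : delMap (k + d) 1 ⟨(p : ℕ) - 1, by omega⟩ = p :=
      Fin.ext (by rw [delMap_mk]; split <;> omega)
    rw [e1, e2] at hA
    rw [e3, e4] at hB
    rw [heq] at hA
    have hiff2 := hA.symm.trans hB
    rw [Fin.lt_def, Fin.lt_def, hpv] at hiff2
    rcases Nat.lt_or_ge x y with hlt | hge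
    · have h6 := hiff2.mpr (by omega)
      omega
    · have h6 := hiff2.mp (by omega)
      omega
  · -- occurrence for ρ₀
    refine ⟨delMap (k + d) 0, isOcc_delMap τp 0 (by omega), rfl, fun q => ?_⟩
    have h := not_congr (delMap_range (show (0 : ℕ) ≤ k + d by omega) q)
    simpa using h
  · -- occurrence for ρ₁
    refine ⟨delMap (k + d) 1, isOcc_delMap τp 1 (by omega), rfl, fun q => ?_⟩
    have h := not_congr (delMap_range (show (1 : ℕ) ≤ k + d by omega) q)
    simpa using h
  · -- coatom characterization
    intro ρ
    constructor
    · rintro ⟨hσρ, hcovρ⟩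
      obtain ⟨k', ρp⟩ := ρ
      obtain ⟨hlen, hocc⟩ := hcovρ
      have hlen' : k' + 1 = k + d + 1 := hlen
      have ek : k' = k + d := by omega
      subst ek
      obtain ⟨g, hg⟩ := hocc
      have hginj : Function.Injective g := hg.1.injective
      have hcard : (Finset.univ.image g).card = k + d := by
        rw [Finset.card_image_of_injective _ hginj]
        simp
      have hccard : (Finset.univ.image g)ᶜ.card = 1 := by
        rw [Finset.card_compl, hcard]
        simp
      obtain ⟨m, hm⟩ := Finset.card_eq_one.mp hccard
      have hmlt : (m : ℕ) < k + d + 1 := m.isLt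
      have hmem : ∀ q : Fin (k + d + 1), q ∈ Set.range g ↔ (q : ℕ) ≠ (m : ℕ) := by
        intro q
        constructor
        · rintro ⟨j, rfl⟩ hq
          have h2 : g j = m := Fin.ext hq
          have h3 : g j ∈ Finset.univ.image g := Finset.mem_image_of_mem g (Finset.mem_univ j)
          have h4 : g j ∈ (Finset.univ.image g)ᶜ := by rw [hm, h2]; simp
          exact (Finset.mem_compl.mp h4) h3
        · intro hq
          by_contra hnot
          have h4 : q ∉ Finset.univ.image g := by
            intro h5
            obtain ⟨j, _, hj⟩ := Finset.mem_image.mp h5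
            exact hnot ⟨j, hj⟩
          have h6 : q ∈ (Finset.univ.image g)ᶜ := Finset.mem_compl.mpr h4
          rw [hm, Finset.mem_singleton] at h6
          exact hq (congrArg Fin.val h6)
      have hgeq : g = delMap (k + d) (m : ℕ) := by
        refine range_inj' hg.1 delMap_strictMono ?_
        ext q
        rw [hmem q, delMap_range (by omega) q]
      have hgfun : ∀ x : Fin (k + d), g x = delMap (k + d) (m : ℕ) x := congrFun hgeq
      have hgval : ∀ (a : ℕ) (h : a < k + d),
          (g ⟨a, h⟩ : ℕ) = if a < (m : ℕ) then a else a + 1 := by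
        intro a h
        have h8 := congrArg Fin.val (hgfun ⟨a, h⟩)
        rw [delMap_mk] at h8
        exact h8
      rcases Nat.lt_or_ge (m : ℕ) 2 with hm2 | hm2
      · rcases Nat.lt_or_ge (m : ℕ) 1 with hm1 | hm1
        · left
          have hm0 : (m : ℕ) = 0 := by omega
          have hρ : ρp = flatten τp (delMap (k + d) 0) := by
            refine perm_eq_of_cmp _ _ (fun i j => ?_)
            have h7 := hg.2.1 i j
            rw [hgfun i, hgfun j, hm0] at h7
            exact h7.trans (flatten_lt_iff τp _ delMap_strictMono.injective i j).symm
          exact congrArg (Sigma.mk (k + d)) hρ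
        · right
          have hm1' : (m : ℕ) = 1 := by omega
          have hρ : ρp = flatten τp (delMap (k + d) 1) := by
            refine perm_eq_of_cmp _ _ (fun i j => ?_)
            have h7 := hg.2.1 i j
            rw [hgfun i, hgfun j, hm1'] at h7
            exact h7.trans (flatten_lt_iff τp _ delMap_strictMono.injective i j).symm
          exact congrArg (Sigma.mk (k + d)) hρ
      · exfalso
        rcases Nat.lt_or_ge (m : ℕ) (k + d) with hmn | hmn
        · have hB1 : (m : ℕ) - 1 + 1 < k + d := by omega
          have hadj := hg.2.2 ((m : ℕ) - 1) hB1 (by simp [qa]; omega)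
          have q1 := hgval ((m : ℕ) - 1 + 1) hB1
          have q2 := hgval ((m : ℕ) - 1) (Nat.lt_of_succ_lt hB1)
          rw [q1, q2] at hadj
          split_ifs at hadj <;> omega
        · obtain ⟨h', hocc'⟩ := qle_occ hσρ
          have hcomp := isOcc_comp hocc' hg
          have hfeq := huniq _ hcomp
          have hval : ((g (h' ⟨k - 1, hk1⟩)) : ℕ) = (f ⟨k - 1, hk1⟩ : ℕ) :=
            congrArg Fin.val (congrFun hfeq ⟨k - 1, hk1⟩)
          have hlt' : ((h' ⟨k - 1, hk1⟩ : Fin (k + d)) : ℕ) < k + d := (h' ⟨k - 1, hk1⟩).isLt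
          have q3 := hgval ((h' ⟨k - 1, hk1⟩ : Fin (k + d)) : ℕ) hlt'
          have e7 : (⟨((h' ⟨k - 1, hk1⟩ : Fin (k + d)) : ℕ), hlt'⟩ : Fin (k + d)) =
              h' ⟨k - 1, hk1⟩ := Fin.ext rfl
          rw [e7] at q3
          rw [q3] at hval
          split_ifs at hval <;> omega
    · have hcov0 : ∀ m : ℕ, m ≤ 1 →
          QCov ⟨k + d, flatten τp (delMap (k + d) m)⟩ ⟨k + d + 1, τp⟩ :=
        fun m hm => ⟨rfl, delMap (k + d) m, isOcc_delMap τp m hm⟩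
      have hsuf : ∀ m : ℕ, m ≤ 1 →
          QLe ⟨k, σp⟩ ⟨k + d, flatten τp (delMap (k + d) m)⟩ := by
        intro m hm
        refine suffix_qle d k σp _ (fun i j => ?_)
        have h4 := flatten_lt_iff τp (delMap (k + d) m) delMap_strictMono.injective
          ⟨(i : ℕ) + d, Nat.add_lt_add_right i.isLt d⟩
          ⟨(j : ℕ) + d, Nat.add_lt_add_right j.isLt d⟩
        have e5 : ∀ i : Fin k, delMap (k + d) m
            ⟨(i : ℕ) + d, Nat.add_lt_add_right i.isLt d⟩ = f i := by
          intro i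
          apply Fin.ext
          rw [delMap_mk]
          have h6 := hstep (i : ℕ) i.isLt
          have e6 : (⟨(i : ℕ), i.isLt⟩ : Fin k) = i := Fin.ext rfl
          rw [e6] at h6
          rw [if_neg (by omega)]
          omega
        rw [e5 i, e5 j] at h4
        exact (hf.2.1 i j).trans h4.symm
      rintro (rfl | rfl)
      · exact ⟨hsuf 0 (by omega), hcov0 0 (by omega)⟩
      · exact ⟨hsuf 1 (by omega), hcov0 1 (by omega)⟩
end

section
/- In the quasi-consecutive pattern poset, μ(12, 2413) = 2. In particular, the Möbius function of the quasi-consecutive pattern poset attains values outside {−1, 0, 1}. -/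
open scoped Classical

/-- The permutation `2413` (0-indexed values `1,3,0,2`). -/
def p2413 : Equiv.Perm (Fin 4) :=
  ⟨![1, 3, 0, 2], ![2, 0, 3, 1], by decide, by decide⟩

/-! ### Auxiliary material -/

def VOccD (a : ℕ → Bool) (σ τ : QPerm) : Prop :=
  ∃ f : Fin σ.1 → Fin τ.1,
    (∀ i j : Fin σ.1, i < j → f i < f j) ∧
    (∀ i j : Fin σ.1, σ.2 i < σ.2 j ↔ τ.2 (f i) < τ.2 (f j)) ∧
    ∀ i : Fin σ.1, ∀ h : (i : ℕ) + 1 < σ.1, a ((i : ℕ) + 1) = false →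
      (f ⟨(i : ℕ) + 1, h⟩ : ℕ) = (f ⟨(i : ℕ), Nat.lt_of_succ_lt h⟩ : ℕ) + 1

instance VOccD.dec (a : ℕ → Bool) (σ τ : QPerm) : Decidable (VOccD a σ τ) := by
  unfold VOccD; infer_instance

def QCovD (σ τ : QPerm) : Prop := σ.1 + 1 = τ.1 ∧ VOccD qa σ τ

instance QCovD.dec (σ τ : QPerm) : Decidable (QCovD σ τ) := by
  unfold QCovD; infer_instance

lemma vOcc_iff_vOccD (a : ℕ → Bool) (σ τ : QPerm) : VOcc a σ τ ↔ VOccD a σ τ := by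
  apply exists_congr; intro f
  constructor
  · rintro ⟨h1, h2, h3⟩
    exact ⟨fun i j hij => h1 hij, h2, fun i h ha => h3 i.1 h ha⟩
  · rintro ⟨h1, h2, h3⟩
    refine ⟨fun i j hij => h1 i j hij, h2, fun i h ha => ?_⟩
    exact h3 ⟨i, Nat.lt_of_succ_lt h⟩ h ha

lemma qCov_iff_qCovD (σ τ : QPerm) : QCov σ τ ↔ QCovD σ τ :=
  and_congr Iff.rfl (vOcc_iff_vOccD qa σ τ)

lemma qle_eq {σ τ : QPerm} (h : QLe σ τ) (hl : τ.1 ≤ σ.1) : σ = τ := by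
  rcases Relation.ReflTransGen.cases_tail h with h' | ⟨z, hz, hc⟩
  · exact h'.symm
  · have h1 := qle_len hz
    have h2 := hc.1
    omega

lemma qle_succ_iff {σ τ : QPerm} (hl : τ.1 = σ.1 + 1) : QLe σ τ ↔ QCov σ τ := by
  constructor
  · intro h
    rcases Relation.ReflTransGen.cases_tail h with h' | ⟨z, hz, hc⟩
    · subst h'; omega
    · have h1 := hc.1
      have : σ = z := qle_eq hz (by omega)
      subst this; exact hc
  · exact Relation.ReflTransGen.single

abbrev S12 : QPerm := ⟨2, Equiv.refl (Fin 2)⟩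
abbrev T2413 : QPerm := ⟨4, p2413⟩

def p231 : Equiv.Perm (Fin 3) := ⟨![1, 2, 0], ![2, 0, 1], by decide, by decide⟩
def p213 : Equiv.Perm (Fin 3) := ⟨![1, 0, 2], ![1, 0, 2], by decide, by decide⟩
def p312 : Equiv.Perm (Fin 3) := ⟨![2, 0, 1], ![1, 2, 0], by decide, by decide⟩

lemma middle_char : ∀ e : Equiv.Perm (Fin 3),
    (QCovD S12 ⟨3, e⟩ ∧ QCovD ⟨3, e⟩ T2413) ↔ (e = p231 ∨ e = p213 ∨ e = p312) := by
  decide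

lemma qcov_S_mid : ∀ e : Equiv.Perm (Fin 3),
    (e = p231 ∨ e = p213 ∨ e = p312) → QCov S12 ⟨3, e⟩ := by
  intro e he
  rw [qCov_iff_qCovD]
  revert e; decide

lemma qcov_mid_T : ∀ e : Equiv.Perm (Fin 3),
    (e = p231 ∨ e = p213 ∨ e = p312) → QCov ⟨3, e⟩ T2413 := by
  intro e he
  rw [qCov_iff_qCovD]
  revert e; decide

lemma mem_permsUpTo {n : ℕ} {z : QPerm} : z ∈ permsUpTo n ↔ z.1 ≤ n := by
  simp [permsUpTo, Finset.mem_sigma, Nat.lt_succ_iff]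

lemma length_ne {σ τ : QPerm} (h : σ.1 ≠ τ.1) : σ ≠ τ := fun hh => h (congrArg Sigma.fst hh)

/-- Inner Möbius value for length-3 intermediate elements. -/
lemma mu3 (e : Equiv.Perm (Fin 3)) (hc : QCov S12 ⟨3, e⟩) :
    qMuAux 3 S12 ⟨3, e⟩ = -1 := by
  have hne : S12 ≠ (⟨3, e⟩ : QPerm) := length_ne (by simp [S12])
  have hfilter : (permsUpTo (3 : ℕ)).filter
      (fun z => QLe S12 z ∧ QLe z ⟨3, e⟩ ∧ z ≠ ⟨3, e⟩) = {S12} := by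
    ext z
    simp only [Finset.mem_filter, mem_permsUpTo, Finset.mem_singleton]
    constructor
    · rintro ⟨hz3, h1, h2, h3⟩
      have l1 : (2 : ℕ) ≤ z.1 := qle_len h1
      have l2 : z.1 ≤ 3 := hz3
      rcases Nat.lt_or_ge z.1 3 with h | h
      · exact (qle_eq h1 (show z.1 ≤ 2 by omega)).symm
      · exact absurd (qle_eq h2 (by simpa using h)) h3
    · rintro rfl
      exact ⟨by simp [S12], Relation.ReflTransGen.refl, Relation.ReflTransGen.single hc,
        hne⟩
  show qMuAux (2 + 1) S12 ⟨3, e⟩ = -1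
  rw [qMuAux, if_neg hne]
  have : ((⟨3, e⟩ : QPerm)).1 = (3 : ℕ) := rfl
  rw [this, hfilter, Finset.sum_singleton]
  show -(qMuAux (1 + 1) S12 S12) = -1
  rw [qMuAux, if_pos rfl]

/-- In the quasi-consecutive pattern poset, `μ(12, 2413) = 2`; in
particular, the Möbius function attains values outside `{-1, 0, 1}`. -/
theorem mu_12_2413_eq_two :
    qMu ⟨2, Equiv.refl (Fin 2)⟩ ⟨4, p2413⟩ = 2 ∧
      ∃ σ τ : QPerm, qMu σ τ ≠ -1 ∧ qMu σ τ ≠ 0 ∧ qMu σ τ ≠ 1 := by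
  have hc1 : QCov S12 (⟨3, p231⟩ : QPerm) := qcov_S_mid _ (Or.inl rfl)
  have hc2 : QCov S12 (⟨3, p213⟩ : QPerm) := qcov_S_mid _ (Or.inr (Or.inl rfl))
  have hc3 : QCov S12 (⟨3, p312⟩ : QPerm) := qcov_S_mid _ (Or.inr (Or.inr rfl))
  have hd1 : QCov (⟨3, p231⟩ : QPerm) T2413 := qcov_mid_T _ (Or.inl rfl)
  have hd2 : QCov (⟨3, p213⟩ : QPerm) T2413 := qcov_mid_T _ (Or.inr (Or.inl rfl))
  have hd3 : QCov (⟨3, p312⟩ : QPerm) T2413 := qcov_mid_T _ (Or.inr (Or.inr rfl))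
  have hST : QLe S12 T2413 :=
    Relation.ReflTransGen.trans (Relation.ReflTransGen.single hc1)
      (Relation.ReflTransGen.single hd1)
  have hneST : S12 ≠ T2413 := length_ne (by simp [S12, T2413])
  have hfilter : (permsUpTo (4 : ℕ)).filter
      (fun z => QLe S12 z ∧ QLe z T2413 ∧ z ≠ T2413) =
      {S12, ⟨3, p231⟩, ⟨3, p213⟩, ⟨3, p312⟩} := by
    ext z
    simp only [Finset.mem_filter, mem_permsUpTo, Finset.mem_insert, Finset.mem_singleton]
    constructor
    · rintro ⟨hz4, h1, h2, h3⟩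
      have l1 : (2 : ℕ) ≤ z.1 := qle_len h1
      interval_cases h : z.1
      · -- z.1 = 2
        exact Or.inl (qle_eq h1 (show z.1 ≤ 2 by omega)).symm
      · -- z.1 = 3
        obtain ⟨n, e⟩ := z
        simp only at h
        subst h
        have hca : QCov S12 ⟨3, e⟩ := (qle_succ_iff rfl).mp h1
        have hcb : QCov (⟨3, e⟩ : QPerm) T2413 := (qle_succ_iff rfl).mp h2
        have := (middle_char e).mp
          ⟨(qCov_iff_qCovD _ _).mp hca, (qCov_iff_qCovD _ _).mp hcb⟩
        rcases this with rfl | rfl | rfl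
        · exact Or.inr (Or.inl rfl)
        · exact Or.inr (Or.inr (Or.inl rfl))
        · exact Or.inr (Or.inr (Or.inr rfl))
      · -- z.1 = 4
        exact absurd (qle_eq h2 (show (4:ℕ) ≤ z.1 by omega)) h3
    · rintro (rfl | rfl | rfl | rfl)
      · exact ⟨by simp [S12], Relation.ReflTransGen.refl, hST, hneST⟩
      · exact ⟨by simp, Relation.ReflTransGen.single hc1,
          Relation.ReflTransGen.single hd1, length_ne (by simp [T2413])⟩
      · exact ⟨by simp, Relation.ReflTransGen.single hc2,
          Relation.ReflTransGen.single hd2, length_ne (by simp [T2413])⟩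
      · exact ⟨by simp, Relation.ReflTransGen.single hc3,
          Relation.ReflTransGen.single hd3, length_ne (by simp [T2413])⟩
  have hsum : qMu S12 T2413 = 2 := by
    show qMuAux (3 + 1) S12 T2413 = 2
    rw [qMuAux, if_neg hneST]
    have : (T2413).1 = (4 : ℕ) := rfl
    rw [this, hfilter]
    have hne1 : S12 ∉ ({⟨3, p231⟩, ⟨3, p213⟩, ⟨3, p312⟩} : Finset QPerm) := by
      simp only [Finset.mem_insert, Finset.mem_singleton]
      push_neg
      exact ⟨length_ne (by simp [S12]), length_ne (by simp [S12]),
        length_ne (by simp [S12])⟩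
    have hne2 : (⟨3, p231⟩ : QPerm) ∉ ({⟨3, p213⟩, ⟨3, p312⟩} : Finset QPerm) := by
      simp only [Finset.mem_insert, Finset.mem_singleton]
      push_neg
      refine ⟨fun hh => ?_, fun hh => ?_⟩ <;>
        · injection hh with h1 h2
          exact absurd h2 (by decide)
    have hne3 : (⟨3, p213⟩ : QPerm) ∉ ({⟨3, p312⟩} : Finset QPerm) := by
      simp only [Finset.mem_singleton]
      intro hh
      injection hh with h1 h2
      exact absurd h2 (by decide)
    rw [Finset.sum_insert hne1, Finset.sum_insert hne2, Finset.sum_insert hne3,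
      Finset.sum_singleton]
    have e0 : qMuAux 3 S12 S12 = 1 := by
      show qMuAux (2 + 1) S12 S12 = 1
      rw [qMuAux, if_pos rfl]
    rw [e0, mu3 _ hc1, mu3 _ hc2, mu3 _ hc3]
    norm_num
  have hmain : qMu ⟨2, Equiv.refl (Fin 2)⟩ ⟨4, p2413⟩ = 2 := hsum
  exact ⟨hmain, ⟨S12, T2413, by rw [hsum]; norm_num, by rw [hsum]; norm_num,
    by rw [hsum]; norm_num⟩⟩
end

section
/- Let A be a lower triangular (0,1)-matrix all of whose rows are zero except row 3, which equals (0,1,0). Then 1234 occurs in 342156 as an A-vincular pattern, but 1234 is not below 342156 in the A-vincular pattern poset. -/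
open scoped Classical

/-- The matrix whose rows are all zero except row 3, which is `(0,1,0)`. -/
def exA : ℕ → ℕ → Bool := fun i j => decide (i = 3 ∧ j = 2)

/-- The permutation `342156` (0-indexed values `2,3,1,0,4,5`). -/
def p342156 : Equiv.Perm (Fin 6) :=
  ⟨![2, 3, 1, 0, 4, 5], ![3, 2, 0, 1, 4, 5], by decide, by decide⟩

/-- Decidable reformulation of `IsOcc` with the gap quantifier over `Fin k`. -/
def IsOccB (a : ℕ → Bool) {k n : ℕ} (σ : Equiv.Perm (Fin k)) (τ : Equiv.Perm (Fin n))
    (f : Fin k → Fin n) : Prop :=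
  StrictMono f ∧ (∀ i j : Fin k, σ i < σ j ↔ τ (f i) < τ (f j)) ∧
    ∀ i : Fin k, ∀ h : (i : ℕ) + 1 < k, a ((i : ℕ) + 1) = false →
      (f ⟨(i : ℕ) + 1, h⟩ : ℕ) = (f ⟨(i : ℕ), Nat.lt_of_succ_lt h⟩ : ℕ) + 1

instance IsOccB.decidable (a : ℕ → Bool) {k n : ℕ} (σ : Equiv.Perm (Fin k))
    (τ : Equiv.Perm (Fin n)) (f : Fin k → Fin n) : Decidable (IsOccB a σ τ f) := by
  unfold IsOccB StrictMono
  exact instDecidableAnd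

theorem isOcc_iff_isOccB (a : ℕ → Bool) {k n : ℕ} (σ : Equiv.Perm (Fin k))
    (τ : Equiv.Perm (Fin n)) (f : Fin k → Fin n) : IsOcc a σ τ f ↔ IsOccB a σ τ f := by
  unfold IsOcc IsOccB
  refine and_congr_right fun _ => and_congr_right fun _ => ?_
  constructor
  · intro h i hi ha; exact h i hi ha
  · intro h i hi ha; exact h ⟨i, Nat.lt_of_succ_lt hi⟩ hi ha

theorem mle_len_le (A : ℕ → ℕ → Bool) {σ τ : QPerm} (h : MLe A σ τ) : σ.1 ≤ τ.1 := by
  induction h with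
  | refl => exact le_rfl
  | tail _ hcov ih => have := hcov.1; omega

set_option maxRecDepth 40000 in
theorem keyA : ∀ π : Equiv.Perm (Fin 5),
    (∀ i j : Fin 5, π i < π j ↔
      p342156 (![0, 1, 2, 3, 4] i) < p342156 (![0, 1, 2, 3, 4] j)) →
    ¬ ∃ g : Fin 4 → Fin 5, IsOccB (fun j => exA 3 j) (Equiv.refl (Fin 4)) π g := by
  decide

set_option maxRecDepth 40000 in
theorem keyB : ∀ π : Equiv.Perm (Fin 5),
    (∀ i j : Fin 5, π i < π j ↔
      p342156 (![1, 2, 3, 4, 5] i) < p342156 (![1, 2, 3, 4, 5] j)) →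
    ¬ ∃ g : Fin 4 → Fin 5, IsOccB (fun j => exA 3 j) (Equiv.refl (Fin 4)) π g := by
  decide

/-- The key finite check: no length-5 permutation lies strictly between. -/
theorem no_middle : ∀ π : Equiv.Perm (Fin 5),
    ¬ ((∃ f : Fin 5 → Fin 6, IsOccB (fun j => exA 4 j) π p342156 f) ∧
       (∃ f : Fin 4 → Fin 5, IsOccB (fun j => exA 3 j) (Equiv.refl (Fin 4)) π f)) := by
  rintro π ⟨⟨f, hfm, hford, hfadj⟩, hg⟩
  have hA : ∀ j, exA 4 j = false := by intro j; simp [exA]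
  have e0 : (f 1 : ℕ) = (f 0 : ℕ) + 1 := hfadj 0 (by decide) (hA 1)
  have e1 : (f 2 : ℕ) = (f 1 : ℕ) + 1 := hfadj 1 (by decide) (hA 2)
  have e2 : (f 3 : ℕ) = (f 2 : ℕ) + 1 := hfadj 2 (by decide) (hA 3)
  have e3 : (f 4 : ℕ) = (f 3 : ℕ) + 1 := hfadj 3 (by decide) (hA 4)
  have h4 : (f 4 : ℕ) < 6 := (f 4).isLt
  have h0 : (f 0 : ℕ) = 0 ∨ (f 0 : ℕ) = 1 := by omega
  rcases h0 with h0 | h0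
  · refine keyA π ?_ hg
    have hv : ∀ i : Fin 5, f i = ![0, 1, 2, 3, 4] i := by
      intro i; apply Fin.ext; fin_cases i <;> simp <;> omega
    intro i j; rw [hford i j, hv i, hv j]
  · refine keyB π ?_ hg
    have hv : ∀ i : Fin 5, f i = ![1, 2, 3, 4, 5] i := by
      intro i; apply Fin.ext; fin_cases i <;> simp <;> omega
    intro i j; rw [hford i j, hv i, hv j]

/-- `1234` occurs in `342156` as an `exA`-vincular pattern, but is not below
it in the `exA`-vincular pattern poset. -/
theorem occurs_but_not_le :
    MOcc exA ⟨4, Equiv.refl (Fin 4)⟩ ⟨6, p342156⟩ ∧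
      ¬ MLe exA ⟨4, Equiv.refl (Fin 4)⟩ ⟨6, p342156⟩ := by
  constructor
  · refine ⟨![0, 1, 4, 5], ?_⟩
    rw [isOcc_iff_isOccB]
    decide
  · intro h
    rcases Relation.ReflTransGen.cases_head h with heq | ⟨ρ, hcov, hle⟩
    · exact absurd (congrArg Sigma.fst heq) (by decide)
    · have h5 : ρ.1 = 5 := by have := hcov.1; simpa using this.symm
      rcases Relation.ReflTransGen.cases_head hle with heq | ⟨ρ', hcov', hle'⟩
      · rw [heq] at h5; exact absurd h5 (by decide)
      · have h6 : ρ'.1 = 6 := by have := hcov'.1; omega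
        have hρ'τ : ρ' = (⟨6, p342156⟩ : QPerm) := by
          rcases Relation.ReflTransGen.cases_head hle' with heq | ⟨ρ'', hcov'', hle''⟩
          · exact heq
          · have h1 := hcov''.1
            have h2 := mle_len_le exA hle''
            have h3 : (⟨6, p342156⟩ : QPerm).fst = 6 := rfl
            omega
        subst hρ'τ
        obtain ⟨n, π⟩ := ρ
        have hn : n = 5 := h5
        subst hn
        refine no_middle π ⟨?_, ?_⟩
        · obtain ⟨f, hf⟩ := hcov'.2
          exact ⟨f, (isOcc_iff_isOccB _ _ _ f).mp hf⟩
        · obtain ⟨f, hf⟩ := hcov.2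
          exact ⟨f, (isOcc_iff_isOccB _ _ _ f).mp hf⟩
end
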